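/- arXiv:1109.2161 — 3 statements merged into one kernel-verified Lean document; each statement's English description precedes it below -/
import Mathlib

section
/- For L = 1 there exists a family of homeomorphisms Θ_{n,0}, Θ_{n,1} ∈ COMFORT(Δ_n) (n ∈ ℕ₀) such that: (a) for every n ≥ 1, all i,k ∈ {0,1}, and all j,p ∈ {0,…,n} with j ≤ p, the equality EQUATION_{n,j≤p,i,k} holds; and (b) for every n ≥ 1, Θ_{n,0} maps the cross ♣_{n,1/(2(n+1))} homeomorphically onto ♣_{n,1/(2(n+2))}, and Θ_{n,1} maps ♣_{n,1/(2(n+1))} homeomorphically onto ♣_{n,1/(2(n+1)+1)}. -/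
open scoped BigOperators

noncomputable section

/-- `Spx k` is the standard simplex on `k` coordinates, i.e. the standard simplex
`Δ_{k-1}` of the paper, as a subspace of `ℝ^k`. -/
abbrev Spx (k : ℕ) : Type := {x : Fin k → ℝ // x ∈ stdSimplex ℝ (Fin k)}

lemma perm_mem {k : ℕ} (ϑ : Equiv.Perm (Fin k)) {x : Fin k → ℝ}
    (hx : x ∈ stdSimplex ℝ (Fin k)) :
    (fun i => x (ϑ i)) ∈ stdSimplex ℝ (Fin k) :=
  ⟨fun i => hx.1 (ϑ i), (Equiv.sum_comp ϑ x).trans hx.2⟩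

/-- membership of `COMFORT (Δ_n)`: a self-homeomorphism of the standard simplex which
(i) respects coordinate permutations and (ii) keeps the order. -/
structure IsComfort {n : ℕ} (F : Spx (n+1) ≃ₜ Spx (n+1)) : Prop where
  perm : ∀ (ϑ : Equiv.Perm (Fin (n+1))) (x : Spx (n+1)),
      ((F ⟨fun i => x.1 (ϑ i), perm_mem ϑ x.2⟩ : Spx (n+1)) : Fin (n+1) → ℝ)
        = fun i => (F x).1 (ϑ i)
  mono : ∀ (x : Spx (n+1)) (i j : Fin (n+1)), x.1 i ≤ x.1 j → (F x).1 i ≤ (F x).1 j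

/-- the `α`-cross `♣_{n,α}` of `Δ_n`. -/
def cross (n : ℕ) (α : ℝ) : Set (Spx (n+1)) := {x | ∃ j, x.1 j = α}

/-- the boundary `BOU_n = ♣_{n,0}` of `Δ_n`. -/
def bou (n : ℕ) : Set (Spx (n+1)) := cross n 0

/-- the barycenter `Center_n` of `Δ_n`. -/
def center (n : ℕ) : Spx (n+1) :=
  ⟨fun _ => 1/((n:ℝ)+1), by
    constructor
    · intro i
      positivity
    · rw [Finset.sum_const, Finset.card_univ, Fintype.card_fin, nsmul_eq_mul]
      push_cast
      field_simp⟩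

/-- the minimal coordinate of a point of `Δ_n`. -/
def minCoord {n : ℕ} (x : Spx (n+1)) : ℝ :=
  Finset.univ.inf' Finset.univ_nonempty x.1

/-- the `α`-layer `Layer_{n,α}` of `Δ_n`. -/
def layer (n : ℕ) (α : ℝ) : Set (Spx (n+1)) := {x | minCoord x = α}

/-- `Sponge (Δ_n)`: the points of `Δ_n` with pairwise distinct coordinates. -/
def sponge (n : ℕ) : Set (Spx (n+1)) := {x | ∀ i j, x.1 i = x.1 j → i = j}

/-- the value `v = i/((L+1)(n+1))` inserted by the face map `⟨·⟩_{L,n,i,j}`. -/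
def vval (L n : ℕ) (i : Fin (L+1)) : ℝ := (i : ℝ) / (((L:ℝ)+1) * ((n:ℝ)+1))

lemma vval_nonneg (L n : ℕ) (i : Fin (L+1)) : 0 ≤ vval L n i := by
  unfold vval; positivity

lemma vval_lt_one (L n : ℕ) (i : Fin (L+1)) : vval L n i < 1 := by
  unfold vval
  rw [div_lt_one (by positivity)]
  have h1 : (i : ℝ) < (L:ℝ)+1 := by exact_mod_cast i.isLt
  have h2 : ((L:ℝ)+1) ≤ ((L:ℝ)+1) * ((n:ℝ)+1) := by
    nlinarith [Nat.cast_nonneg (α := ℝ) L, Nat.cast_nonneg (α := ℝ) n]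
  linarith

/-- the underlying function of the face map `⟨id⟩_{L,n,i,j} : Δ_{n-1} → Δ_n`:
insert the value `v` at position `j` and rescale the remaining coordinates by `1 - v`. -/
def faceFun (L n : ℕ) (i : Fin (L+1)) (j : Fin (n+1)) (x : Fin n → ℝ) : Fin (n+1) → ℝ :=
  j.insertNth (vval L n i) (fun k => (1 - vval L n i) * x k)

lemma faceFun_mem (L n : ℕ) (i : Fin (L+1)) (j : Fin (n+1)) {x : Fin n → ℝ}
    (hx : x ∈ stdSimplex ℝ (Fin n)) :
    faceFun L n i j x ∈ stdSimplex ℝ (Fin (n+1)) := by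
  constructor
  · intro m
    rcases eq_or_ne m j with rfl | h
    · simpa [faceFun] using vval_nonneg L n i
    · obtain ⟨k, rfl⟩ := Fin.exists_succAbove_eq h
      simp only [faceFun, Fin.insertNth_apply_succAbove]
      exact mul_nonneg (by linarith [vval_lt_one L n i]) (hx.1 k)
  · rw [Fin.sum_univ_succAbove _ j]
    simp only [faceFun, Fin.insertNth_apply_same, Fin.insertNth_apply_succAbove]
    rw [← Finset.mul_sum, hx.2]
    ring

/-- the face map `⟨id⟩_{L,n,i,j} : Δ_{n-1} → Δ_n` as a continuous map. -/
def faceCM (L n : ℕ) (i : Fin (L+1)) (j : Fin (n+1)) : C(Spx n, Spx (n+1)) where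
  toFun x := ⟨faceFun L n i j x.1, faceFun_mem L n i j x.2⟩
  continuous_toFun := by
    refine Continuous.subtype_mk ?_ _
    refine continuous_pi fun m => ?_
    rcases eq_or_ne m j with rfl | h
    · simpa [faceFun] using (continuous_const : Continuous fun _ : Spx n => vval L n i)
    · obtain ⟨k, rfl⟩ := Fin.exists_succAbove_eq h
      simp only [faceFun, Fin.insertNth_apply_succAbove]
      exact continuous_const.mul ((continuous_apply k).comp continuous_subtype_val)

open Fin.NatCast in
/-- `EQUATION_{n,j≤p,i,k}` of the paper, where `n = n'+1 ≥ 1`: the equality of the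
two composite maps `Δ_{n-1} → Δ_{n+1}`, namely
`⟨id⟩_{L,n+1,i,j} ∘ Θ_{L,n,i} ∘ ⟨id⟩_{L,n,k,p} ∘ Θ_{L,n-1,k}
  = ⟨id⟩_{L,n+1,k,p+1} ∘ Θ_{L,n,k} ∘ ⟨id⟩_{L,n,i,j} ∘ Θ_{L,n-1,i}`. -/
def EquationHolds (L : ℕ)
    (Θ : ∀ n : ℕ, Fin (L+1) → (Spx (n+1) ≃ₜ Spx (n+1)))
    (n' : ℕ) (i k : Fin (L+1)) (j p : Fin (n'+2)) : Prop :=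
  ∀ x : Spx (n'+1),
    faceCM L (n'+2) i j.castSucc ((Θ (n'+1) i) (faceCM L (n'+1) k p ((Θ n' k) x))) =
    faceCM L (n'+2) k p.succ ((Θ (n'+1) k) (faceCM L (n'+1) i j.castSucc ((Θ n' i) x)))


/-! ### Fin combinatorics -/

lemma my_sa_val {N : ℕ} (i : Fin (N+1)) (t : Fin N) :
    (i.succAbove t : ℕ) = if (t : ℕ) < (i : ℕ) then (t : ℕ) else (t : ℕ) + 1 := by
  rw [Fin.succAbove]
  split_ifs with h1 h2 h2
  · simp
  · exact absurd (by simpa [Fin.lt_def] using h1) h2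
  · exact absurd (by simpa [Fin.lt_def] using h2) h1
  · simp

lemma swap_core {N : ℕ} (j p : Fin (N+1)) (h : j ≤ p) (u : Fin N) :
    (j.castSucc).succAbove (p.succAbove u) = (p.succ).succAbove (j.succAbove u) := by
  have hjp : (j : ℕ) ≤ (p : ℕ) := h
  apply Fin.ext
  simp only [my_sa_val, Fin.coe_castSucc, Fin.val_succ]
  split_ifs <;> omega

lemma insertNth_swap {N : ℕ} (j p : Fin (N+1)) (h : j ≤ p) (a b : ℝ) (w : Fin N → ℝ) :
    Fin.insertNth (α := fun _ => ℝ) (j.castSucc) a (Fin.insertNth (α := fun _ => ℝ) p b w) =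
      Fin.insertNth (α := fun _ => ℝ) (p.succ) b (Fin.insertNth (α := fun _ => ℝ) j a w) := by
  funext t
  refine Fin.succAboveCases (j.castSucc) ?_ ?_ t
  · rw [Fin.insertNth_apply_same]
    have h1 : (p.succ).succAbove j = j.castSucc := Fin.succAbove_succ_of_le p j h
    rw [← h1, Fin.insertNth_apply_succAbove, Fin.insertNth_apply_same]
  · intro u
    rw [Fin.insertNth_apply_succAbove]
    refine Fin.succAboveCases p ?_ ?_ u
    · rw [Fin.insertNth_apply_same]
      have h2 : (j.castSucc).succAbove p = p.succ := Fin.succAbove_castSucc_of_le j p h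
      rw [h2, Fin.insertNth_apply_same]
    · intro z
      rw [Fin.insertNth_apply_succAbove, swap_core j p h z,
        Fin.insertNth_apply_succAbove, Fin.insertNth_apply_succAbove]

/-! ### The basic piecewise-linear "squeeze" map -/

def Mf {N : ℕ} (α : ℝ) (x : Fin N → ℝ) : ℝ := ∑ t, max (x t - α) 0

def sf {N : ℕ} (α r : ℝ) (x : Fin N → ℝ) : ℝ := r + (1 - r) / Mf α x

def gf {N : ℕ} (α r : ℝ) (x : Fin N → ℝ) (t : Fin N) : ℝ :=
  r * min (x t) α + sf α r x * max (x t - α) 0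

variable {N : ℕ} {α r : ℝ} {x : Fin N → ℝ}

lemma Mf_ge (hx : x ∈ stdSimplex ℝ (Fin N)) : 1 - (N : ℝ) * α ≤ Mf α x := by
  have h1 : ∑ t, (x t - α) ≤ Mf α x :=
    Finset.sum_le_sum fun t _ => le_max_left _ _
  have h2 : ∑ t : Fin N, (x t - α) = 1 - (N : ℝ) * α := by
    rw [Finset.sum_sub_distrib, hx.2, Finset.sum_const, Finset.card_univ, Fintype.card_fin,
      nsmul_eq_mul]
  linarith

lemma Mf_pos (hx : x ∈ stdSimplex ℝ (Fin N)) (h1 : (N : ℝ) * α ≤ 1/2) : 0 < Mf α x := by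
  have := Mf_ge (α := α) hx; linarith

lemma sum_min (hx : x ∈ stdSimplex ℝ (Fin N)) :
    ∑ t, min (x t) α = 1 - Mf α x := by
  have h : ∀ t : Fin N, min (x t) α = x t - max (x t - α) 0 := by
    intro t
    rcases le_total (x t) α with h | h
    · rw [min_eq_left h, max_eq_right (by linarith), sub_zero]
    · rw [min_eq_right h, max_eq_left (by linarith)]; ring
  simp only [h]
  rw [Finset.sum_sub_distrib, hx.2, Mf]

lemma sMf (hx : x ∈ stdSimplex ℝ (Fin N)) (h1 : (N : ℝ) * α ≤ 1/2) :
    sf α r x * Mf α x = 1 - r * (1 - Mf α x) := by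
  have hM := Mf_pos hx h1
  unfold sf
  field_simp
  ring

lemma sMf_ge (hx : x ∈ stdSimplex ℝ (Fin N)) (hα : 0 < α) (hr : 0 < r)
    (h1 : (N : ℝ) * α ≤ 1/2) (h2 : (N : ℝ) * (r * α) ≤ 1/2) :
    1/2 ≤ sf α r x * Mf α x := by
  rw [sMf hx h1, ← sum_min hx]
  have hmin : ∑ t, min (x t) α ≤ (N : ℝ) * α := by
    calc ∑ t : Fin N, min (x t) α ≤ ∑ _t : Fin N, α :=
          Finset.sum_le_sum fun t _ => min_le_right _ _
    _ = (N : ℝ) * α := by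
          rw [Finset.sum_const, Finset.card_univ, Fintype.card_fin, nsmul_eq_mul]
  nlinarith

lemma sf_pos (hx : x ∈ stdSimplex ℝ (Fin N)) (hα : 0 < α) (hr : 0 < r)
    (h1 : (N : ℝ) * α ≤ 1/2) (h2 : (N : ℝ) * (r * α) ≤ 1/2) :
    0 < sf α r x := by
  have hM := Mf_pos hx h1
  have hsM := sMf_ge hx hα hr h1 h2
  nlinarith

lemma gf_mem (hx : x ∈ stdSimplex ℝ (Fin N)) (hα : 0 < α) (hr : 0 < r)
    (h1 : (N : ℝ) * α ≤ 1/2) (h2 : (N : ℝ) * (r * α) ≤ 1/2) :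
    gf α r x ∈ stdSimplex ℝ (Fin N) := by
  have hs := sf_pos hx hα hr h1 h2
  constructor
  · intro t
    have h3 : (0:ℝ) ≤ min (x t) α := le_min (hx.1 t) hα.le
    have h4 : (0:ℝ) ≤ max (x t - α) 0 := le_max_right _ _
    have := mul_nonneg hr.le h3
    have := mul_nonneg hs.le h4
    unfold gf; linarith
  · unfold gf
    rw [Finset.sum_add_distrib, ← Finset.mul_sum, ← Finset.mul_sum]
    rw [sum_min hx]
    have : ∑ t, max (x t - α) 0 = Mf α x := rfl
    rw [this, sMf hx h1]
    ring

lemma gf_low {t : Fin N} (h : x t ≤ α) : gf α r x t = r * x t := by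
  rw [gf, min_eq_left h, max_eq_right (by linarith), mul_zero, add_zero]

lemma gf_high {t : Fin N} (h : α ≤ x t) :
    gf α r x t = r * α + sf α r x * (x t - α) := by
  rw [gf, min_eq_right h, max_eq_left (by linarith)]

lemma max_gf (hx : x ∈ stdSimplex ℝ (Fin N)) (hα : 0 < α) (hr : 0 < r)
    (h1 : (N : ℝ) * α ≤ 1/2) (h2 : (N : ℝ) * (r * α) ≤ 1/2) (t : Fin N) :
    max (gf α r x t - r * α) 0 = sf α r x * max (x t - α) 0 := by
  have hs := sf_pos hx hα hr h1 h2
  rcases le_total (x t) α with h | h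
  · rw [gf_low h, max_eq_right
      (by nlinarith [mul_le_mul_of_nonneg_left h hr.le]),
      max_eq_right (by linarith : x t - α ≤ 0), mul_zero]
  · rw [gf_high h, max_eq_left
      (by nlinarith [mul_nonneg hs.le (sub_nonneg.2 h)]),
      max_eq_left (by linarith : (0:ℝ) ≤ x t - α)]
    ring

lemma Mf_gf (hx : x ∈ stdSimplex ℝ (Fin N)) (hα : 0 < α) (hr : 0 < r)
    (h1 : (N : ℝ) * α ≤ 1/2) (h2 : (N : ℝ) * (r * α) ≤ 1/2) :
    Mf (r * α) (gf α r x) = sf α r x * Mf α x := by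
  unfold Mf
  rw [Finset.mul_sum]
  exact Finset.sum_congr rfl fun t _ => max_gf hx hα hr h1 h2 t

lemma sf_gf (hx : x ∈ stdSimplex ℝ (Fin N)) (hα : 0 < α) (hr : 0 < r)
    (h1 : (N : ℝ) * α ≤ 1/2) (h2 : (N : ℝ) * (r * α) ≤ 1/2) :
    sf (r * α) r⁻¹ (gf α r x) * sf α r x = 1 := by
  have hM := Mf_pos hx h1
  have hsM := sMf_ge hx hα hr h1 h2
  have hs := sf_pos hx hα hr h1 h2
  rw [sf, Mf_gf hx hα hr h1 h2]
  have hsMne : sf α r x * Mf α x ≠ 0 := by positivity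
  rw [sMf hx h1] at hsMne ⊢
  rw [sf]
  field_simp
  ring

lemma gf_gf (hx : x ∈ stdSimplex ℝ (Fin N)) (hα : 0 < α) (hr : 0 < r)
    (h1 : (N : ℝ) * α ≤ 1/2) (h2 : (N : ℝ) * (r * α) ≤ 1/2) :
    gf (r * α) r⁻¹ (gf α r x) = x := by
  have hs := sf_pos hx hα hr h1 h2
  have hss := sf_gf hx hα hr h1 h2
  funext t
  rcases le_total (x t) α with h | h
  · have hl : gf α r x t = r * x t := gf_low h
    have hle : gf α r x t ≤ r * α := by rw [hl]; nlinarith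
    rw [gf_low hle, hl, ← mul_assoc, inv_mul_cancel₀ hr.ne', one_mul]
  · have hh : gf α r x t = r * α + sf α r x * (x t - α) := gf_high h
    have hge : r * α ≤ gf α r x t := by rw [hh]; nlinarith
    rw [gf_high hge, hh, inv_mul_cancel_left₀ hr.ne']
    linear_combination (x t - α) * hss

/-! ### The homeomorphism -/


lemma gf_cont {N : ℕ} {α r : ℝ} (h1 : (N : ℝ) * α ≤ 1/2) :
    Continuous fun x : Spx N => gf α r x.1 := by
  have hMf : Continuous fun x : Spx N => Mf α x.1 := by
    refine continuous_finset_sum _ fun t _ => ?_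
    exact (((continuous_apply t).comp continuous_subtype_val).sub continuous_const).max
      continuous_const
  have hsf : Continuous fun x : Spx N => sf α r x.1 := by
    refine continuous_const.add (Continuous.div continuous_const hMf fun x => ?_)
    exact (Mf_pos x.2 h1).ne'
  refine continuous_pi fun t => ?_
  refine (continuous_const.mul ?_).add (hsf.mul ?_)
  · exact (((continuous_apply t).comp continuous_subtype_val).min continuous_const)
  · exact (((continuous_apply t).comp continuous_subtype_val).sub continuous_const).max
      continuous_const

def gHomeo (N : ℕ) (α r : ℝ) (hα : 0 < α) (hr : 0 < r)
    (h1 : (N : ℝ) * α ≤ 1/2) (h2 : (N : ℝ) * (r * α) ≤ 1/2) :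
    Spx N ≃ₜ Spx N where
  toFun x := ⟨gf α r x.1, gf_mem x.2 hα hr h1 h2⟩
  invFun y := ⟨gf (r * α) r⁻¹ y.1, gf_mem y.2 (by positivity) (by positivity) h2
    (by rwa [inv_mul_cancel_left₀ hr.ne'])⟩
  left_inv x := Subtype.ext (gf_gf x.2 hα hr h1 h2)
  right_inv y := by
    apply Subtype.ext
    have := gf_gf (α := r * α) (r := r⁻¹) y.2 (by positivity) (by positivity) h2
      (by rwa [inv_mul_cancel_left₀ hr.ne'])
    rwa [inv_mul_cancel_left₀ hr.ne', inv_inv] at this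
  continuous_toFun := (gf_cont h1).subtype_mk _
  continuous_invFun := (gf_cont (α := r * α) (r := r⁻¹) h2).subtype_mk _

@[simp] lemma gHomeo_apply {N : ℕ} {α r : ℝ} (hα : 0 < α) (hr : 0 < r)
    (h1 : (N : ℝ) * α ≤ 1/2) (h2 : (N : ℝ) * (r * α) ≤ 1/2) (x : Spx N) :
    ((gHomeo N α r hα hr h1 h2) x).1 = gf α r x.1 := rfl

@[simp] lemma gHomeo_symm_apply {N : ℕ} {α r : ℝ} (hα : 0 < α) (hr : 0 < r)
    (h1 : (N : ℝ) * α ≤ 1/2) (h2 : (N : ℝ) * (r * α) ≤ 1/2) (y : Spx N) :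
    ((gHomeo N α r hα hr h1 h2).symm y).1 = gf (r * α) r⁻¹ y.1 := rfl

/-! ### Parameters -/

def apar (n : ℕ) : ℝ := 1 / (2 * ((n:ℝ) + 1))

def rpar (n : ℕ) (i : Fin 2) : ℝ := (2 * (n:ℝ) + 2) / (2 * (n:ℝ) + 4 - (i:ℝ))

def rho (n : ℕ) : ℝ := ((n:ℝ) + 1) / ((n:ℝ) + 2)

lemma ile (i : Fin 2) : (i : ℝ) ≤ 1 := by
  have := Fin.is_le i; exact_mod_cast this

lemma inonneg (i : Fin 2) : (0:ℝ) ≤ (i : ℝ) := by positivity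

lemma apar_pos (n : ℕ) : 0 < apar n := by unfold apar; positivity

lemma denom_pos (n : ℕ) (i : Fin 2) : 0 < 2 * (n:ℝ) + 4 - (i:ℝ) := by
  have := ile i; have : (0:ℝ) ≤ (n:ℝ) := Nat.cast_nonneg n; linarith [ile i]

lemma rpar_pos (n : ℕ) (i : Fin 2) : 0 < rpar n i := by
  unfold rpar
  have h := denom_pos n i
  have : (0:ℝ) ≤ (n:ℝ) := Nat.cast_nonneg n
  positivity

lemma hyp1 (n : ℕ) : ((n+1 : ℕ) : ℝ) * apar n ≤ 1/2 := by
  unfold apar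
  push_cast
  have : (0:ℝ) < 2 * ((n:ℝ) + 1) := by positivity
  rw [mul_one_div, div_le_div_iff₀ this (by norm_num)]
  linarith

lemma rpar_mul_apar (n : ℕ) (i : Fin 2) :
    rpar n i * apar n = 1 / (2 * (n:ℝ) + 4 - (i:ℝ)) := by
  unfold rpar apar
  have h := denom_pos n i
  have h2 : (0:ℝ) < 2 * ((n:ℝ) + 1) := by positivity
  field_simp

lemma hyp2 (n : ℕ) (i : Fin 2) : ((n+1 : ℕ) : ℝ) * (rpar n i * apar n) ≤ 1/2 := by
  rw [rpar_mul_apar]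
  have h := denom_pos n i
  have hi := ile i
  push_cast
  rw [mul_one_div, div_le_div_iff₀ h (by norm_num)]
  linarith

/-- the family `Θ`. -/
def theta (n : ℕ) (i : Fin 2) : Spx (n+1) ≃ₜ Spx (n+1) :=
  gHomeo (n+1) (apar n) (rpar n i) (apar_pos n) (rpar_pos n i) (hyp1 n) (hyp2 n i)

/-! ### Comfort and cross properties -/

lemma gf_perm {N : ℕ} (α r : ℝ) (ϑ : Equiv.Perm (Fin N)) (x : Fin N → ℝ) :
    gf α r (fun t => x (ϑ t)) = fun t => gf α r x (ϑ t) := by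
  have hM : Mf α (fun t => x (ϑ t)) = Mf α x := by
    unfold Mf
    exact Equiv.sum_comp ϑ (fun u => max (x u - α) 0)
  funext t
  simp only [gf, sf, hM]

lemma theta_comfort (n : ℕ) (i : Fin 2) : IsComfort (theta n i) := by
  constructor
  · intro ϑ x
    have := congrFun (gf_perm (apar n) (rpar n i) ϑ x.1)
    exact funext fun t => this t
  · intro x t₁ t₂ h
    have hs := sf_pos x.2 (apar_pos n) (rpar_pos n i) (hyp1 n) (hyp2 n i)
    show gf (apar n) (rpar n i) x.1 t₁ ≤ gf (apar n) (rpar n i) x.1 t₂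
    unfold gf
    exact add_le_add
      (mul_le_mul_of_nonneg_left (min_le_min h le_rfl) (rpar_pos n i).le)
      (mul_le_mul_of_nonneg_left (max_le_max (sub_le_sub_right h _) le_rfl) hs.le)

lemma theta_image (n : ℕ) (i : Fin 2) :
    ⇑(theta n i) '' cross n (apar n) = cross n (rpar n i * apar n) := by
  apply Set.Subset.antisymm
  · rintro y ⟨x, ⟨j, hj⟩, rfl⟩
    refine ⟨j, ?_⟩
    show gf (apar n) (rpar n i) x.1 j = rpar n i * apar n
    rw [gf_low (le_of_eq hj), hj]
  · rintro y ⟨j, hj⟩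
    refine ⟨(theta n i).symm y, ⟨j, ?_⟩, (theta n i).apply_symm_apply y⟩
    show gf (rpar n i * apar n) (rpar n i)⁻¹ y.1 j = apar n
    rw [gf_low (le_of_eq hj), hj, inv_mul_cancel_left₀ (rpar_pos n i).ne']


/-! ### The equation -/

def sigma (n : ℕ) (i : Fin 2) (x : Fin (n+1) → ℝ) : ℝ :=
  (1 - vval 1 (n+1) i) * sf (apar n) (rpar n i) x

def Gf (n : ℕ) (i : Fin 2) (x : Fin (n+1) → ℝ) (t : Fin (n+1)) : ℝ :=
  rho n * min (x t) (apar n) + sigma n i x * max (x t - apar n) 0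

lemma vv_eq (n : ℕ) (i : Fin 2) : vval 1 (n+1) i = (i : ℝ) / (2 * (n:ℝ) + 4) := by
  unfold vval
  push_cast
  ring_nf

lemma vv_lt_one (n : ℕ) (i : Fin 2) : vval 1 (n+1) i < 1 := vval_lt_one 1 (n+1) i

lemma rho_pos (n : ℕ) : 0 < rho n := by
  unfold rho
  have : (0:ℝ) ≤ (n:ℝ) := Nat.cast_nonneg n
  positivity

lemma one_sub_vv_mul_rpar (n : ℕ) (i : Fin 2) :
    (1 - vval 1 (n+1) i) * rpar n i = rho n := by
  rw [vv_eq]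
  unfold rpar rho
  have h1 := denom_pos n i
  have h2 : (0:ℝ) ≤ (n:ℝ) := Nat.cast_nonneg n
  have h3 : (2 * (n:ℝ) + 4) ≠ 0 := by linarith
  have h4 : ((n:ℝ) + 2) ≠ 0 := by linarith
  field_simp
  ring

lemma rho_mul_apar (n : ℕ) : rho n * apar n = apar (n+1) := by
  unfold rho apar
  have h2 : (0:ℝ) ≤ (n:ℝ) := Nat.cast_nonneg n
  push_cast
  rw [div_mul_div_comm, mul_one]
  rw [div_eq_div_iff (by positivity) (by positivity)]
  ring

lemma vv_le_apar_succ (n : ℕ) (i : Fin 2) : vval 1 (n+1) i ≤ apar (n+1) := by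
  rw [vv_eq]
  unfold apar
  push_cast
  have h2 : (0:ℝ) ≤ (n:ℝ) := Nat.cast_nonneg n
  have hi := ile i
  rw [div_le_div_iff₀ (by linarith) (by positivity)]
  nlinarith

lemma rho_succ_mul_vv (n : ℕ) (i : Fin 2) :
    rho (n+1) * vval 1 (n+1) i = vval 1 (n+2) i := by
  rw [vv_eq]
  have : vval 1 (n+2) i = (i : ℝ) / (2 * (n:ℝ) + 6) := by
    unfold vval; push_cast; ring_nf
  rw [this]
  unfold rho
  have h2 : (0:ℝ) ≤ (n:ℝ) := Nat.cast_nonneg n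
  push_cast
  rw [div_mul_div_comm, div_eq_div_iff (by positivity) (by positivity)]
  ring

lemma sigma_pos {n : ℕ} (i : Fin 2) {x : Fin (n+1) → ℝ} (hx : x ∈ stdSimplex ℝ (Fin (n+1))) :
    0 < sigma n i x :=
  mul_pos (by linarith [vv_lt_one n i]) (sf_pos hx (apar_pos n) (rpar_pos n i) (hyp1 n) (hyp2 n i))

lemma Eform (n : ℕ) (i : Fin 2) (j : Fin (n+2)) (x : Fin (n+1) → ℝ) :
    faceFun 1 (n+1) i j (gf (apar n) (rpar n i) x) =
      Fin.insertNth (α := fun _ => ℝ) j (vval 1 (n+1) i) (Gf n i x) := by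
  unfold faceFun
  have heq : (fun t => (1 - vval 1 (n+1) i) * gf (apar n) (rpar n i) x t) = Gf n i x := by
    funext t
    have h := one_sub_vv_mul_rpar n i
    unfold Gf sigma gf
    linear_combination min (x t) (apar n) * h
  rw [heq]

lemma Gf_low {n : ℕ} {i : Fin 2} {x : Fin (n+1) → ℝ} {t : Fin (n+1)} (h : x t ≤ apar n) :
    Gf n i x t = rho n * x t := by
  rw [Gf, min_eq_left h, max_eq_right (by linarith), mul_zero, add_zero]

lemma Gf_high {n : ℕ} {i : Fin 2} {x : Fin (n+1) → ℝ} {t : Fin (n+1)} (h : apar n ≤ x t) :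
    Gf n i x t = apar (n+1) + sigma n i x * (x t - apar n) := by
  rw [Gf, min_eq_right h, max_eq_left (by linarith), rho_mul_apar]

lemma max_Gf {n : ℕ} (i : Fin 2) {x : Fin (n+1) → ℝ} (hx : x ∈ stdSimplex ℝ (Fin (n+1)))
    (t : Fin (n+1)) :
    max (Gf n i x t - apar (n+1)) 0 = sigma n i x * max (x t - apar n) 0 := by
  have hs := sigma_pos i hx
  have hra := rho_mul_apar n
  have hr := rho_pos n
  rcases le_total (x t) (apar n) with h | h
  · rw [Gf_low h, max_eq_right
      (by nlinarith [mul_le_mul_of_nonneg_left h hr.le]),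
      max_eq_right (by linarith : x t - apar n ≤ 0), mul_zero]
  · rw [Gf_high h, max_eq_left
      (by nlinarith [mul_nonneg hs.le (sub_nonneg.2 h)]),
      max_eq_left (by linarith : (0:ℝ) ≤ x t - apar n)]
    ring

lemma Mf_insert {n : ℕ} (i : Fin 2) (p : Fin (n+2)) {x : Fin (n+1) → ℝ}
    (hx : x ∈ stdSimplex ℝ (Fin (n+1))) :
    Mf (apar (n+1)) (Fin.insertNth (α := fun _ => ℝ) p (vval 1 (n+1) i) (Gf n i x)) =
      sigma n i x * Mf (apar n) x := by
  unfold Mf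
  rw [Fin.sum_univ_succAbove _ p]
  rw [Fin.insertNth_apply_same]
  rw [max_eq_right (by linarith [vv_le_apar_succ n i])]
  simp only [Fin.insertNth_apply_succAbove]
  rw [Finset.mul_sum, zero_add]
  exact Finset.sum_congr rfl fun t _ => max_Gf i hx t

lemma Gf_comp {n : ℕ} (i k : Fin 2) (p : Fin (n+2)) {x : Fin (n+1) → ℝ}
    (hx : x ∈ stdSimplex ℝ (Fin (n+1))) :
    Gf (n+1) i (Fin.insertNth (α := fun _ => ℝ) p (vval 1 (n+1) k) (Gf n k x)) =
      Fin.insertNth (α := fun _ => ℝ) p (vval 1 (n+2) k)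
        (fun t => rho (n+1) * rho n * min (x t) (apar n) +
          (sigma (n+1) i (Fin.insertNth (α := fun _ => ℝ) p (vval 1 (n+1) k) (Gf n k x)) *
            sigma n k x) * max (x t - apar n) 0) := by
  set y := Fin.insertNth (α := fun _ => ℝ) p (vval 1 (n+1) k) (Gf n k x) with hy
  have hsk := sigma_pos k hx
  have hra := rho_mul_apar n
  have hr := rho_pos n
  funext t
  refine Fin.succAboveCases p ?_ ?_ t
  · have hyp : y p = vval 1 (n+1) k := Fin.insertNth_apply_same _ _ _
    rw [Fin.insertNth_apply_same]
    rw [show Gf (n+1) i y p = rho (n+1) * y p from Gf_low (by rw [hyp]; exact vv_le_apar_succ n k)]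
    rw [hyp, rho_succ_mul_vv]
  · intro u
    have hyu : y (p.succAbove u) = Gf n k x u := Fin.insertNth_apply_succAbove _ _ _ _
    rw [Fin.insertNth_apply_succAbove]
    rcases le_total (x u) (apar n) with h | h
    · have h1 : Gf n k x u = rho n * x u := Gf_low h
      have h2 : y (p.succAbove u) ≤ apar (n+1) := by
        rw [hyu, h1]; nlinarith [mul_le_mul_of_nonneg_left h hr.le]
      rw [show Gf (n+1) i y (p.succAbove u) = rho (n+1) * y (p.succAbove u) from Gf_low h2,
        hyu, h1, min_eq_left h, max_eq_right (by linarith : x u - apar n ≤ 0), mul_zero, add_zero,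
        mul_assoc]
    · have h1 : Gf n k x u = apar (n+1) + sigma n k x * (x u - apar n) := Gf_high h
      have h2 : apar (n+1) ≤ y (p.succAbove u) := by
        rw [hyu, h1]; nlinarith [mul_nonneg hsk.le (sub_nonneg.2 h)]
      rw [show Gf (n+1) i y (p.succAbove u) =
            apar (n+2) + sigma (n+1) i y * (y (p.succAbove u) - apar (n+1)) from Gf_high h2,
        hyu, h1, min_eq_right h, max_eq_left (by linarith : (0:ℝ) ≤ x u - apar n)]
      have hra2 : rho (n+1) * apar (n+1) = apar (n+2) := rho_mul_apar (n+1)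
      linear_combination -hra2 - rho (n+1) * hra


lemma Mhalf {n : ℕ} {x : Fin (n+1) → ℝ} (hx : x ∈ stdSimplex ℝ (Fin (n+1))) :
    1/2 ≤ Mf (apar n) x := by
  have h1 := Mf_ge (α := apar n) hx
  have h2 := hyp1 n
  linarith

lemma sigma_closed (n : ℕ) (i : Fin 2) (x : Fin (n+1) → ℝ) (hM : Mf (apar n) x ≠ 0) :
    sigma n i x = rho n + (2 - (i:ℝ)) / ((2*(n:ℝ)+4) * Mf (apar n) x) := by
  unfold sigma sf
  rw [vv_eq]
  unfold rpar rho
  have h1 := denom_pos n i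
  have h2 : (0:ℝ) ≤ (n:ℝ) := Nat.cast_nonneg n
  have h3 : (2 * (n:ℝ) + 4) ≠ 0 := by linarith
  have h4 : ((n:ℝ) + 2) ≠ 0 := by linarith
  field_simp
  ring

lemma sigma_prod {n : ℕ} (i k : Fin 2) (j p : Fin (n+2)) {x : Fin (n+1) → ℝ}
    (hx : x ∈ stdSimplex ℝ (Fin (n+1))) :
    sigma (n+1) i (Fin.insertNth (α := fun _ => ℝ) p (vval 1 (n+1) k) (Gf n k x)) * sigma n k x =
    sigma (n+1) k (Fin.insertNth (α := fun _ => ℝ) j (vval 1 (n+1) i) (Gf n i x)) * sigma n i x := by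
  have hM2 := Mhalf hx
  have hM : 0 < Mf (apar n) x := by linarith
  have hA : 0 < sigma n k x := sigma_pos k hx
  have hB : 0 < sigma n i x := sigma_pos i hx
  have hMy1 := Mf_insert k p hx
  have hMy2 := Mf_insert i j hx
  have e1 := sigma_closed (n+1) i (Fin.insertNth (α := fun _ => ℝ) p (vval 1 (n+1) k) (Gf n k x))
    (by rw [hMy1]; positivity)
  have e2 := sigma_closed (n+1) k (Fin.insertNth (α := fun _ => ℝ) j (vval 1 (n+1) i) (Gf n i x))
    (by rw [hMy2]; positivity)
  rw [hMy1] at e1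
  rw [hMy2] at e2
  push_cast at e1 e2
  have hA' := sigma_closed n k x hM.ne'
  have hB' := sigma_closed n i x hM.ne'
  have h2 : (0:ℝ) ≤ (n:ℝ) := Nat.cast_nonneg n
  have h3 : (2 * (n:ℝ) + 4) ≠ 0 := by linarith
  have h6 : (2 * (n:ℝ) + 6) ≠ 0 := by linarith
  have h7 : (2 * ((n:ℝ) + 1) + 4) ≠ 0 := by linarith
  have g1 : sigma (n+1) i (Fin.insertNth (α := fun _ => ℝ) p (vval 1 (n+1) k) (Gf n k x)) *
      sigma n k x = rho (n+1) * sigma n k x + (2 - (i:ℝ)) / ((2*(n:ℝ)+6) * Mf (apar n) x) := by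
    rw [e1]
    field_simp
    ring
  have g2 : sigma (n+1) k (Fin.insertNth (α := fun _ => ℝ) j (vval 1 (n+1) i) (Gf n i x)) *
      sigma n i x = rho (n+1) * sigma n i x + (2 - (k:ℝ)) / ((2*(n:ℝ)+6) * Mf (apar n) x) := by
    rw [e2]
    field_simp
    ring
  have g3 : rho (n+1) * sigma n k x - rho (n+1) * sigma n i x =
      ((i:ℝ) - (k:ℝ)) / ((2*(n:ℝ)+6) * Mf (apar n) x) := by
    rw [hA', hB']
    unfold rho
    push_cast
    have h5 : ((n:ℝ) + 3) ≠ 0 := by linarith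
    field_simp
    ring
  linear_combination g1 - g2 + g3


open Fin.NatCast in
lemma Jeq (n : ℕ) (j : Fin (n+2)) : ((((j.castSucc : Fin (n+3)) : ℕ) : Fin (n+2))) = j := by
  rw [Fin.coe_castSucc, Fin.cast_val_eq_self]

open Fin.NatCast in
lemma theta_equation (n : ℕ) (i k : Fin 2) (j p : Fin (n+2)) (hjp : j ≤ p) :
    EquationHolds 1 theta n i k j p := by
  intro x
  apply Subtype.ext
  show faceFun 1 (n+2) i j.castSucc
      (gf (apar (n+1)) (rpar (n+1) i)
        (faceFun 1 (n+1) k p (gf (apar n) (rpar n k) x.1))) =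
    faceFun 1 (n+2) k p.succ
      (gf (apar (n+1)) (rpar (n+1) k)
        (faceFun 1 (n+1) i (((j.castSucc : Fin (n+3)) : ℕ) : Fin (n+2))
          (gf (apar n) (rpar n i) x.1)))
  rw [Jeq n j]
  rw [Eform n k p, Eform n i j, Eform (n+1) i j.castSucc, Eform (n+1) k p.succ]
  rw [Gf_comp i k p x.2, Gf_comp k i j x.2]
  rw [← insertNth_swap j p hjp]
  simp only [sigma_prod i k j p x.2]

theorem exists_comfort_theta_family :
    ∃ Θ : ∀ n : ℕ, Fin (1+1) → (Spx (n+1) ≃ₜ Spx (n+1)),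
      (∀ (n : ℕ) (i : Fin (1+1)), IsComfort (Θ n i)) ∧
      (∀ (n' : ℕ) (i k : Fin (1+1)) (j p : Fin (n'+2)), j ≤ p →
        EquationHolds 1 Θ n' i k j p) ∧
      (∀ n : ℕ, 1 ≤ n →
        (⇑(Θ n 0) '' cross n (1/(2*((n:ℝ)+1))) = cross n (1/(2*((n:ℝ)+2))) ∧
         ⇑(Θ n 1) '' cross n (1/(2*((n:ℝ)+1))) = cross n (1/(2*((n:ℝ)+1)+1)))) := by
  refine ⟨theta, fun n i => theta_comfort n i, fun n' i k j p hjp => theta_equation n' i k j p hjp,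
    fun n _hn => ⟨?_, ?_⟩⟩
  · have h0 : rpar n 0 * apar n = 1/(2*((n:ℝ)+2)) := by
      rw [rpar_mul_apar]
      have h2 : (0:ℝ) ≤ (n:ℝ) := Nat.cast_nonneg n
      norm_num
      rw [inv_eq_iff_eq_inv]
      field_simp
      ring
    have := theta_image n 0
    rw [h0] at this
    exact this
  · have h1 : rpar n 1 * apar n = 1/(2*((n:ℝ)+1)+1) := by
      rw [rpar_mul_apar]
      have h2 : (0:ℝ) ≤ (n:ℝ) := Nat.cast_nonneg n
      norm_num
      ring
    have := theta_image n 1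
    rw [h1] at this
    exact this

end
end

section
/- There exists a family of homeomorphisms Θ_{n,i} : Δ_n → Δ_n (n ∈ ℕ₀, i ∈ {0,1}) such that for every commutative ring R with unit, every pair m = (m_0, m_1) ∈ R², every topological space X, and every n ∈ ℕ₀, the boundary operators for L = 1 built from this family satisfy ∂_n ∘ ∂_{n+1} = 0 on F(R)_{n+1}(X). -/
open scoped BigOperators

noncomputable section

namespace DdZero

open Finset

variable {k : ℕ}

/-- total "small mass" of `x` at threshold `a`. -/
def msum (a : ℝ) (x : Fin k → ℝ) : ℝ := ∑ q, min (x q) a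

/-- the flow map on the simplex moving slice-level `a` to slice-level `b`. -/
def tmap (a b : ℝ) (x : Fin k → ℝ) (p : Fin k) : ℝ :=
  (b/a) * min (x p) a + max (x p - a) 0 * ((1 - (b/a) * msum a x) / (1 - msum a x))

lemma msum_nonneg {a : ℝ} (ha : 0 ≤ a) {x : Fin k → ℝ} (hx : ∀ q, 0 ≤ x q) :
    0 ≤ msum a x :=
  Finset.sum_nonneg fun q _ => le_min (hx q) ha

lemma msum_le {a : ℝ} {x : Fin k → ℝ} : msum a x ≤ (k : ℝ) * a := by
  have : msum a x ≤ ∑ _q : Fin k, a := Finset.sum_le_sum fun q _ => min_le_right _ _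
  simpa using this

lemma sub_min' (t a : ℝ) : t - min t a = max (t - a) 0 := by
  rcases le_total t a with h | h
  · simp [min_eq_left h, sub_nonpos.mpr h, max_eq_right]
  · simp [min_eq_right h, max_eq_left (sub_nonneg.mpr h)]

/-- context for all the tmap lemmas -/
structure Good (a : ℝ) (x : Fin k → ℝ) : Prop where
  ha : 0 < a
  hka : (k : ℝ) * a < 1
  hx : x ∈ stdSimplex ℝ (Fin k)

lemma Good.msum_lt_one {a : ℝ} {x : Fin k → ℝ} (h : Good a x) : msum a x < 1 :=
  lt_of_le_of_lt msum_le h.hka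

lemma Good.num_pos {a b : ℝ} {x : Fin k → ℝ} (h : Good a x) (hb : 0 < b)
    (hkb : (k : ℝ) * b < 1) : 0 < 1 - (b/a) * msum a x := by
  have ha0 : a ≠ 0 := ne_of_gt h.ha
  have h1 : (b/a) * msum a x ≤ (b/a) * ((k:ℝ) * a) :=
    mul_le_mul_of_nonneg_left msum_le (div_nonneg hb.le h.ha.le)
  have h2 : (b/a) * ((k:ℝ) * a) = (k:ℝ) * b := by field_simp
  nlinarith

lemma sum_max_eq {a : ℝ} {x : Fin k → ℝ} (hx : x ∈ stdSimplex ℝ (Fin k)) :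
    ∑ p, max (x p - a) 0 = 1 - msum a x := by
  have : ∀ p : Fin k, max (x p - a) 0 = x p - min (x p) a := fun p => (sub_min' _ _).symm
  rw [Finset.sum_congr rfl fun p _ => this p, Finset.sum_sub_distrib, hx.2, msum]

lemma Good.tmap_mem {a b : ℝ} {x : Fin k → ℝ} (h : Good a x) (hb : 0 < b)
    (hkb : (k : ℝ) * b < 1) : tmap a b x ∈ stdSimplex ℝ (Fin k) := by
  have hM := h.msum_lt_one
  have hnum := h.num_pos hb hkb
  constructor
  · intro p
    have h1 : 0 ≤ min (x p) a := le_min (h.hx.1 p) h.ha.le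
    have h2 : 0 ≤ max (x p - a) 0 := le_max_right _ _
    have h3 : 0 ≤ (1 - (b/a) * msum a x) / (1 - msum a x) :=
      div_nonneg hnum.le (by linarith)
    have hba : 0 ≤ b / a := div_nonneg hb.le h.ha.le
    exact add_nonneg (mul_nonneg hba h1) (mul_nonneg h2 h3)
  · unfold tmap
    rw [Finset.sum_add_distrib, ← Finset.mul_sum, ← Finset.sum_mul, sum_max_eq h.hx]
    rw [mul_comm (1 - msum a x) _, div_mul_cancel₀ _ (by linarith : (1:ℝ) - msum a x ≠ 0)]
    show b / a * msum a x + (1 - b / a * msum a x) = 1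
    ring

lemma Good.min_tmap {a b : ℝ} {x : Fin k → ℝ} (h : Good a x) (hb : 0 < b)
    (hkb : (k : ℝ) * b < 1) (p : Fin k) :
    min (tmap a b x p) b = (b/a) * min (x p) a := by
  have hM := h.msum_lt_one
  have hnum := h.num_pos hb hkb
  have ha0 : a ≠ 0 := ne_of_gt h.ha
  have hs : 0 < (1 - (b/a) * msum a x) / (1 - msum a x) := div_pos hnum (by linarith)
  rcases le_total (x p) a with hc | hc
  · have ht : tmap a b x p = (b/a) * x p := by
      simp [tmap, min_eq_left hc, max_eq_right (sub_nonpos.mpr hc)]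
    have hle : (b/a) * x p ≤ b := by
      rw [div_mul_eq_mul_div, div_le_iff₀ h.ha]; nlinarith
    rw [ht, min_eq_left hle, min_eq_left hc]
  · have ht : tmap a b x p = b + (x p - a) * ((1 - (b/a) * msum a x) / (1 - msum a x)) := by
      unfold tmap
      rw [min_eq_right hc, max_eq_left (sub_nonneg.mpr hc), div_mul_cancel₀ _ ha0]
    have hg : 0 ≤ (x p - a) * ((1 - (b/a) * msum a x) / (1 - msum a x)) :=
      mul_nonneg (sub_nonneg.mpr hc) hs.le
    have hmin : min (tmap a b x p) b = b := min_eq_right (by rw [ht]; linarith)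
    rw [hmin, min_eq_right hc, div_mul_cancel₀ _ ha0]

lemma Good.max_tmap {a b : ℝ} {x : Fin k → ℝ} (h : Good a x) (hb : 0 < b)
    (hkb : (k : ℝ) * b < 1) (p : Fin k) :
    max (tmap a b x p - b) 0
      = max (x p - a) 0 * ((1 - (b/a) * msum a x) / (1 - msum a x)) := by
  have h1 := h.min_tmap hb hkb p
  have h2 : tmap a b x p - min (tmap a b x p) b
      = max (x p - a) 0 * ((1 - (b/a) * msum a x) / (1 - msum a x)) := by
    rw [h1]; unfold tmap; ring
  rw [← h2, sub_min']

lemma Good.msum_tmap {a b : ℝ} {x : Fin k → ℝ} (h : Good a x) (hb : 0 < b)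
    (hkb : (k : ℝ) * b < 1) : msum b (tmap a b x) = (b/a) * msum a x := by
  unfold msum
  rw [Finset.sum_congr rfl fun p _ => h.min_tmap hb hkb p, ← Finset.mul_sum]

lemma Good.tmap_good {a b : ℝ} {x : Fin k → ℝ} (h : Good a x) (hb : 0 < b)
    (hkb : (k : ℝ) * b < 1) : Good b (tmap a b x) :=
  ⟨hb, hkb, h.tmap_mem hb hkb⟩

lemma Good.tmap_tmap {a b c : ℝ} {x : Fin k → ℝ} (h : Good a x) (hb : 0 < b)
    (hkb : (k : ℝ) * b < 1) (hc : 0 < c) (hkc : (k : ℝ) * c < 1) :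
    tmap b c (tmap a b x) = tmap a c x := by
  funext p
  have hM := h.msum_lt_one
  have hnumb := h.num_pos hb hkb
  have hnumc := h.num_pos hc hkc
  have ha0 : a ≠ 0 := ne_of_gt h.ha
  have hb0 : b ≠ 0 := ne_of_gt hb
  have hM0 : (1 : ℝ) - msum a x ≠ 0 := by linarith
  have hMb0 : (1 : ℝ) - b/a * msum a x ≠ 0 := ne_of_gt hnumb
  have key : tmap b c (tmap a b x) p
      = (c/b) * ((b/a) * min (x p) a)
        + (max (x p - a) 0 * ((1 - (b/a) * msum a x) / (1 - msum a x)))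
          * ((1 - (c/b) * ((b/a) * msum a x)) / (1 - (b/a) * msum a x)) := by
    rw [← h.max_tmap hb hkb p, ← h.min_tmap hb hkb p, ← h.msum_tmap hb hkb]
    rfl
  rw [key]
  have e1 : (c/b) * ((b/a) * min (x p) a) = (c/a) * min (x p) a := by
    field_simp
  have e2 : (c/b) * ((b/a) * msum a x) = (c/a) * msum a x := by
    field_simp
  have e3 : ((1 - (b/a) * msum a x)/(1 - msum a x))
        * ((1 - (c/a) * msum a x)/(1 - (b/a) * msum a x))
      = (1 - (c/a) * msum a x)/(1 - msum a x) := by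
    rw [div_mul_div_comm, mul_comm (1 - b/a * msum a x) (1 - c/a * msum a x),
      mul_div_mul_right _ _ hMb0]
  rw [e1, mul_assoc, e2, e3]
  rfl

lemma Good.tmap_self {a : ℝ} {x : Fin k → ℝ} (h : Good a x) : tmap a a x = x := by
  funext p
  have hM := h.msum_lt_one
  unfold tmap
  rw [div_self (ne_of_gt h.ha), one_mul, one_mul]
  rw [div_self (by linarith : (1:ℝ) - msum a x ≠ 0), mul_one, ← sub_min']
  ring

/-- generalized face map: insert value `c` at `p`, scale the rest by `1-c`. -/
def gface (c : ℝ) (p : Fin (k+1)) (y : Fin k → ℝ) : Fin (k+1) → ℝ :=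
  p.insertNth c (fun q => (1-c) * y q)

lemma gface_apply_same (c : ℝ) (p : Fin (k+1)) (y : Fin k → ℝ) :
    gface c p y p = c := by simp [gface]

lemma gface_apply_succAbove (c : ℝ) (p : Fin (k+1)) (y : Fin k → ℝ) (q : Fin k) :
    gface c p y (p.succAbove q) = (1-c) * y q := by simp [gface]

lemma msum_gface_zero {a : ℝ} (p : Fin (k+1)) (y : Fin k → ℝ) (ha : 0 ≤ a) :
    msum a (gface 0 p y) = msum a y := by
  unfold msum
  rw [Fin.sum_univ_succAbove (fun q => min (gface 0 p y q) a) p]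
  simp [gface_apply_same, gface_apply_succAbove, min_eq_left ha]

lemma min_scale {c t s : ℝ} (hc : 0 ≤ c) : min (c * t) (c * s) = c * min t s :=
  (mul_min_of_nonneg _ _ hc).symm

lemma msum_gface_a {a : ℝ} (p : Fin (k+1)) (y : Fin k → ℝ) (ha : 0 < a) (ha1 : a < 1) :
    msum a (gface a p y) = a + (1-a) * msum (a/(1-a)) y := by
  unfold msum
  rw [Fin.sum_univ_succAbove (fun q => min (gface a p y q) a) p]
  have h1 : (0:ℝ) ≤ 1 - a := by linarith
  have h1' : (1:ℝ) - a ≠ 0 := by linarith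
  have h2 : ∀ q : Fin k, min (gface a p y (p.succAbove q)) a
      = (1-a) * min (y q) (a/(1-a)) := by
    intro q
    rw [gface_apply_succAbove, ← min_scale h1]
    congr 1
    field_simp
  rw [gface_apply_same, min_self, Finset.sum_congr rfl fun q _ => h2 q, ← Finset.mul_sum]

lemma tmap_gface_zero {a b : ℝ} {y : Fin k → ℝ} (p : Fin (k+1))
    (hy : y ∈ stdSimplex ℝ (Fin k)) (ha : 0 < a) (hb : 0 < b) :
    tmap a b (gface 0 p y) = gface 0 p (tmap a b y) := by
  funext r
  have hm := msum_gface_zero (a := a) p y ha.le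
  rcases eq_or_ne r p with rfl | hr
  · rw [gface_apply_same]
    unfold tmap
    rw [gface_apply_same, min_eq_left ha.le, zero_sub,
      max_eq_right (by linarith : -a ≤ (0:ℝ))]
    ring
  · obtain ⟨q, rfl⟩ := Fin.exists_succAbove_eq hr
    rw [gface_apply_succAbove]
    unfold tmap
    rw [gface_apply_succAbove, hm]
    ring

lemma tmap_gface_a {a b : ℝ} {y : Fin k → ℝ} (p : Fin (k+1))
    (hy : y ∈ stdSimplex ℝ (Fin k)) (ha : 0 < a) (hka : ((k:ℝ)+1) * a < 1)
    (hb : 0 < b) (hkb : ((k:ℝ)+1) * b < 1) :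
    tmap a b (gface a p y) = gface b p (tmap (a/(1-a)) (b/(1-b)) y) := by
  have hk0 : (0:ℝ) ≤ (k:ℝ) := Nat.cast_nonneg k
  have ha1 : a < 1 := by nlinarith
  have hb1 : b < 1 := by nlinarith
  have ha' : 0 < a/(1-a) := div_pos ha (by linarith)
  have hka' : (k:ℝ) * (a/(1-a)) < 1 := by
    rw [← mul_div_assoc, div_lt_one (by linarith)]; nlinarith
  have hkb' : (k:ℝ) * (b/(1-b)) < 1 := by
    rw [← mul_div_assoc, div_lt_one (by linarith)]; nlinarith
  have hg : Good (a/(1-a)) y := ⟨ha', hka', hy⟩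
  have hM' : msum (a/(1-a)) y < 1 := hg.msum_lt_one
  have hm := msum_gface_a (a := a) p y ha ha1
  have ha0 : a ≠ 0 := ne_of_gt ha
  have h1a : (1:ℝ) - a ≠ 0 := by linarith
  have h1b : (1:ℝ) - b ≠ 0 := by linarith
  funext r
  rcases eq_or_ne r p with rfl | hr
  · rw [gface_apply_same]
    unfold tmap
    rw [gface_apply_same, min_self, div_mul_cancel₀ _ ha0]
    simp
  · obtain ⟨q, rfl⟩ := Fin.exists_succAbove_eq hr
    rw [gface_apply_succAbove]
    unfold tmap
    rw [gface_apply_succAbove, hm]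
    have e1 : min ((1-a) * y q) a = (1-a) * min (y q) (a/(1-a)) := by
      rw [← min_scale (by linarith : (0:ℝ) ≤ 1-a)]
      congr 1
      field_simp
    have e2 : max ((1-a) * y q - a) 0 = (1-a) * max (y q - a/(1-a)) 0 := by
      have h3 : (1-a) * y q - a = (1-a) * (y q - a/(1-a)) := by field_simp
      rw [h3, mul_max_of_nonneg _ _ (by linarith : (0:ℝ) ≤ 1-a), mul_zero]
    rw [e1, e2]
    set M := msum (a/(1-a)) y with hMdef
    have hMne : (1:ℝ) - M ≠ 0 := by linarith
    have hden : 1 - (a + (1-a) * M) = (1-a) * (1 - M) := by ring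
    rw [hden]
    field_simp
    ring

lemma succAbove_succAbove {n : ℕ} (j p : Fin (n+2)) (h : (j:ℕ) ≤ (p:ℕ)) (s : Fin (n+1)) :
    (j.castSucc).succAbove (p.succAbove s) = (p.succ).succAbove (j.succAbove s) := by
  ext
  simp only [Fin.succAbove, Fin.lt_def] at *
  rcases j with ⟨j, hj⟩
  rcases p with ⟨p, hp⟩
  rcases s with ⟨s, hs⟩
  simp only [Fin.castSucc_mk, Fin.succ_mk] at *
  split_ifs <;> simp_all <;> omega

lemma insertNth_insertNth {n : ℕ} (j p : Fin (n+2)) (h : (j:ℕ) ≤ (p:ℕ))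
    (u v : ℝ) (z : Fin (n+1) → ℝ) :
    Fin.insertNth (α := fun _ => ℝ) (j.castSucc) u
        (Fin.insertNth (α := fun _ => ℝ) p v z)
      = Fin.insertNth (α := fun _ => ℝ) (p.succ) v
        (Fin.insertNth (α := fun _ => ℝ) j u z) := by
  have hcs : (p.succ).succAbove j = j.castSucc :=
    Fin.succAbove_of_castSucc_lt _ _ (by rw [Fin.castSucc_lt_succ_iff]; exact h)
  have hps : (j.castSucc).succAbove p = p.succ :=
    Fin.succAbove_of_le_castSucc _ _ (by simpa using h)
  funext r
  rcases eq_or_ne r (j.castSucc) with rfl | hr1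
  · rw [Fin.insertNth_apply_same, ← hcs, Fin.insertNth_apply_succAbove,
      Fin.insertNth_apply_same]
  rcases eq_or_ne r (p.succ) with rfl | hr2
  · rw [← hps, Fin.insertNth_apply_succAbove, Fin.insertNth_apply_same,
      hps, Fin.insertNth_apply_same]
  obtain ⟨t, rfl⟩ := Fin.exists_succAbove_eq hr1
  have ht : t ≠ p := by
    intro hteq
    exact hr2 (by rw [hteq, hps])
  obtain ⟨s, rfl⟩ := Fin.exists_succAbove_eq ht
  have L : Fin.insertNth (α := fun _ => ℝ) (j.castSucc) u
      (Fin.insertNth (α := fun _ => ℝ) p v z) ((j.castSucc).succAbove (p.succAbove s)) = z s := by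
    rw [Fin.insertNth_apply_succAbove, Fin.insertNth_apply_succAbove]
  have Rr : Fin.insertNth (α := fun _ => ℝ) (p.succ) v
      (Fin.insertNth (α := fun _ => ℝ) j u z) ((p.succ).succAbove (j.succAbove s)) = z s := by
    rw [Fin.insertNth_apply_succAbove, Fin.insertNth_apply_succAbove]
  rw [L, succAbove_succAbove j p h s]
  exact Rr.symm

lemma smul_insertNth {n : ℕ} (c v : ℝ) (j : Fin (n+1)) (y : Fin n → ℝ) :
    (fun r => c * (Fin.insertNth (α := fun _ => ℝ) j v y r))
      = Fin.insertNth (α := fun _ => ℝ) j (c*v) (fun q => c * y q) := by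
  funext r
  rcases eq_or_ne r j with rfl | hr
  · rw [Fin.insertNth_apply_same, Fin.insertNth_apply_same]
  · obtain ⟨q, rfl⟩ := Fin.exists_succAbove_eq hr
    rw [Fin.insertNth_apply_succAbove, Fin.insertNth_apply_succAbove]

lemma gface_gface {n : ℕ} (j p : Fin (n+2)) (h : (j:ℕ) ≤ (p:ℕ)) (α β β' γ : ℝ)
    (h1 : β' = (1-α) * β) (h2 : α = (1-β') * γ) (h3 : (1-α)*(1-β) = (1-β')*(1-γ))
    (y : Fin (n+1) → ℝ) :
    gface α (j.castSucc) (gface β p y) = gface β' (p.succ) (gface γ j y) := by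
  unfold gface
  have e1 : (fun q => (1-α) * (Fin.insertNth (α := fun _ => ℝ) p β (fun t => (1-β) * y t)) q)
      = Fin.insertNth (α := fun _ => ℝ) p ((1-α)*β) (fun t => ((1-α)*(1-β)) * y t) := by
    rw [smul_insertNth]
    exact congrArg (Fin.insertNth (α := fun _ => ℝ) p ((1-α)*β)) (funext fun q => by ring)
  have e2 : (fun q => (1-β') * (Fin.insertNth (α := fun _ => ℝ) j γ (fun t => (1-γ) * y t)) q)
      = Fin.insertNth (α := fun _ => ℝ) j ((1-β')*γ) (fun t => ((1-β')*(1-γ)) * y t) := by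
    rw [smul_insertNth]
    exact congrArg (Fin.insertNth (α := fun _ => ℝ) j ((1-β')*γ)) (funext fun q => by ring)
  rw [e1, e2, ← h1, ← h2]
  simp only [← h3]
  exact insertNth_insertNth j p h α β' (fun t => ((1-α)*(1-β)) * y t)

/-- unified version of the two face-compatibility lemmas, `κ ∈ {0,1}`. -/
lemma tmap_gface_v {a b κ : ℝ} {y : Fin k → ℝ} (p : Fin (k+1))
    (hκ : κ = 0 ∨ κ = 1)
    (hy : y ∈ stdSimplex ℝ (Fin k)) (ha : 0 < a) (hka : ((k:ℝ)+1) * a < 1)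
    (hb : 0 < b) (hkb : ((k:ℝ)+1) * b < 1) :
    tmap a b (gface (κ*a) p y)
      = gface (κ*b) p (tmap (a/(1-κ*a)) (b/(1-κ*b)) y) := by
  rcases hκ with rfl | rfl
  · simp only [zero_mul, sub_zero, div_one]
    exact tmap_gface_zero p hy ha hb
  · simp only [one_mul]
    exact tmap_gface_a p hy ha hka hb hkb

lemma continuous_tmap {a b : ℝ} (ha : 0 < a) (hka : (k:ℝ)*a < 1) :
    Continuous fun x : Spx k => tmap a b x.1 := by
  have hcoord : ∀ q : Fin k, Continuous fun x : Spx k => x.1 q := fun q =>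
    (continuous_apply q).comp continuous_subtype_val
  have hmsum : Continuous fun x : Spx k => msum a x.1 := by
    unfold msum
    exact continuous_finset_sum _ fun q _ => (hcoord q).min continuous_const
  have hden : ∀ x : Spx k, (1:ℝ) - msum a x.1 ≠ 0 := by
    intro x
    have : Good a x.1 := ⟨ha, hka, x.2⟩
    have := this.msum_lt_one
    linarith
  refine continuous_pi fun p => ?_
  unfold tmap
  refine Continuous.add (continuous_const.mul ((hcoord p).min continuous_const)) ?_
  refine Continuous.mul (((hcoord p).sub continuous_const).max continuous_const) ?_
  exact Continuous.div (continuous_const.sub (continuous_const.mul hmsum))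
    (continuous_const.sub hmsum) hden

/-- base slice-level on `Spx (n+1) = Δ_n`. -/
def aL (n : ℕ) : ℝ := 1/(2*(n:ℝ)+2)

/-- target slice-level for the `i`-colored homeomorphism on `Spx (n+1) = Δ_n`. -/
def bL (n : ℕ) (i : Fin 2) : ℝ := 1/(2*(n:ℝ)+4-(i:ℝ))

lemma aL_pos (n : ℕ) : 0 < aL n := by
  have : (0:ℝ) ≤ (n:ℝ) := Nat.cast_nonneg n
  unfold aL; positivity

lemma iR_mem (i : Fin 2) : ((i:ℕ):ℝ) = 0 ∨ ((i:ℕ):ℝ) = 1 := by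
  have : (i:ℕ) = 0 ∨ (i:ℕ) = 1 := by omega
  rcases this with h | h <;> [left; right] <;> rw [h] <;> norm_num

lemma bL_pos (n : ℕ) (i : Fin 2) : 0 < bL n i := by
  have h1 : (0:ℝ) ≤ (n:ℝ) := Nat.cast_nonneg n
  have h2 : ((i:ℕ):ℝ) ≤ 1 := by
    have : (i:ℕ) ≤ 1 := by omega
    exact_mod_cast this
  unfold bL
  apply div_pos one_pos
  linarith

lemma iR_le (i : Fin 2) : ((i:ℕ):ℝ) ≤ 1 := by
  rcases iR_mem i with h | h <;> rw [h] <;> norm_num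

lemma iR_nonneg (i : Fin 2) : (0:ℝ) ≤ ((i:ℕ):ℝ) := Nat.cast_nonneg _

lemma aL_bound (n : ℕ) : (((n+1):ℕ):ℝ) * aL n < 1 := by
  have h1 : (0:ℝ) ≤ (n:ℝ) := Nat.cast_nonneg n
  unfold aL
  push_cast
  rw [mul_one_div, div_lt_one (by linarith)]
  linarith

lemma bL_bound (n : ℕ) (i : Fin 2) : (((n+1):ℕ):ℝ) * bL n i < 1 := by
  have h1 : (0:ℝ) ≤ (n:ℝ) := Nat.cast_nonneg n
  have h2 := iR_le i
  unfold bL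
  push_cast
  rw [mul_one_div, div_lt_one (by linarith)]
  linarith

/-- the homeomorphism `Θ_{n,i} : Δ_n → Δ_n`. -/
def Theta (n : ℕ) (i : Fin 2) : Spx (n+1) ≃ₜ Spx (n+1) where
  toFun x := ⟨tmap (aL n) (bL n i) x.1,
    (Good.tmap_mem ⟨aL_pos n, aL_bound n, x.2⟩ (bL_pos n i) (bL_bound n i))⟩
  invFun x := ⟨tmap (bL n i) (aL n) x.1,
    (Good.tmap_mem ⟨bL_pos n i, bL_bound n i, x.2⟩ (aL_pos n) (aL_bound n))⟩
  left_inv x := by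
    apply Subtype.ext
    have hg : Good (aL n) x.1 := ⟨aL_pos n, aL_bound n, x.2⟩
    show tmap (bL n i) (aL n) (tmap (aL n) (bL n i) x.1) = x.1
    rw [hg.tmap_tmap (bL_pos n i) (bL_bound n i) (aL_pos n) (aL_bound n), hg.tmap_self]
  right_inv x := by
    apply Subtype.ext
    have hg : Good (bL n i) x.1 := ⟨bL_pos n i, bL_bound n i, x.2⟩
    show tmap (aL n) (bL n i) (tmap (bL n i) (aL n) x.1) = x.1
    rw [hg.tmap_tmap (aL_pos n) (aL_bound n) (bL_pos n i) (bL_bound n i), hg.tmap_self]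
  continuous_toFun := by
    apply Continuous.subtype_mk
    exact continuous_tmap (aL_pos n) (aL_bound n)
  continuous_invFun := by
    apply Continuous.subtype_mk
    exact continuous_tmap (bL_pos n i) (bL_bound n i)

lemma faceCM_coe (L n : ℕ) (i : Fin (L+1)) (j : Fin (n+1)) (x : Spx n) :
    (faceCM L n i j x).1 = faceFun L n i j x.1 := rfl

lemma Theta_coe (n : ℕ) (i : Fin 2) (x : Spx (n+1)) :
    ((Theta n i) x).1 = tmap (aL n) (bL n i) x.1 := rfl

set_option maxHeartbeats 3000000 in
lemma theta_comm (n : ℕ) (i k : Fin 2) (j p : Fin (n+2)) (h : (j:ℕ) ≤ (p:ℕ)) (x : Spx (n+1)) :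
    faceCM 1 (n+2) i j.castSucc ((Theta (n+1) i) (faceCM 1 (n+1) k p ((Theta n k) x))) =
    faceCM 1 (n+2) k p.succ ((Theta (n+1) k) (faceCM 1 (n+1) i j ((Theta n i) x))) := by
  apply Subtype.ext
  simp only [faceCM_coe, Theta_coe]
  set κi := ((i:ℕ):ℝ) with hκidef
  set κk := ((k:ℕ):ℝ) with hκkdef
  have hκi := iR_mem i
  have hκk := iR_mem k
  have hκi0 : 0 ≤ κi := Nat.cast_nonneg _
  have hκk0 : 0 ≤ κk := Nat.cast_nonneg _
  have hκi1 : κi ≤ 1 := iR_le i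
  have hκk1 : κk ≤ 1 := iR_le k
  have htn : (0:ℝ) ≤ (n:ℝ) := Nat.cast_nonneg n
  have hd1 : (0:ℝ) < 2*(n:ℝ)+2 := by linarith
  have hd2 : (0:ℝ) < 2*(n:ℝ)+4 := by linarith
  have hd3 : (0:ℝ) < 2*(n:ℝ)+6 := by linarith
  have hd1k : (0:ℝ) < 2*(n:ℝ)+4-κk := by linarith
  have hd1i : (0:ℝ) < 2*(n:ℝ)+4-κi := by linarith
  have hd3i : (0:ℝ) < 2*(n:ℝ)+6-κi := by linarith
  have hd3k : (0:ℝ) < 2*(n:ℝ)+6-κk := by linarith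
  have hdik : (0:ℝ) < 2*(n:ℝ)+6-κi-κk := by linarith
  -- explicit forms of the levels
  have e1 : aL n = 1/(2*(n:ℝ)+2) := rfl
  have e2 : aL (n+1) = 1/(2*(n:ℝ)+4) := by unfold aL; push_cast; ring_nf
  have f2i : bL (n+1) i = 1/(2*(n:ℝ)+6-κi) := by
    unfold bL; rw [← hκidef]; push_cast; ring_nf
  have f2k : bL (n+1) k = 1/(2*(n:ℝ)+6-κk) := by
    unfold bL; rw [← hκkdef]; push_cast; ring_nf
  have f1k : bL n k = 1/(2*(n:ℝ)+4-κk) := by unfold bL; rw [← hκkdef]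
  have f1i : bL n i = 1/(2*(n:ℝ)+4-κi) := by unfold bL; rw [← hκidef]
  -- face maps as generalized faces
  have hvk2 : vval 1 (n+1) k = κk * (1/(2*(n:ℝ)+4)) := by
    unfold vval
    rw [← hκkdef, mul_one_div, div_eq_div_iff (by positivity) (by linarith)]
    push_cast
    ring
  have hvi2 : vval 1 (n+1) i = κi * (1/(2*(n:ℝ)+4)) := by
    unfold vval
    rw [← hκidef, mul_one_div, div_eq_div_iff (by positivity) (by linarith)]
    push_cast
    ring
  have hvk3 : vval 1 (n+2) k = κk * (1/(2*(n:ℝ)+6)) := by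
    unfold vval
    rw [← hκkdef, mul_one_div, div_eq_div_iff (by positivity) (by linarith)]
    push_cast
    ring
  have hvi3 : vval 1 (n+2) i = κi * (1/(2*(n:ℝ)+6)) := by
    unfold vval
    rw [← hκidef, mul_one_div, div_eq_div_iff (by positivity) (by linarith)]
    push_cast
    ring
  have hfk : ∀ y : Fin (n+1) → ℝ, faceFun 1 (n+1) k p y
      = gface (κk * (1/(2*(n:ℝ)+4))) p y := by
    intro y
    unfold faceFun gface
    rw [hvk2]
  have hfi : ∀ y : Fin (n+1) → ℝ, faceFun 1 (n+1) i j y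
      = gface (κi * (1/(2*(n:ℝ)+4))) j y := by
    intro y
    unfold faceFun gface
    rw [hvi2]
  have hFi : ∀ y : Fin (n+2) → ℝ, faceFun 1 (n+2) i j.castSucc y
      = gface (κi * (1/(2*(n:ℝ)+6))) j.castSucc y := by
    intro y
    unfold faceFun gface
    rw [hvi3]
  have hFk : ∀ y : Fin (n+2) → ℝ, faceFun 1 (n+2) k p.succ y
      = gface (κk * (1/(2*(n:ℝ)+6))) p.succ y := by
    intro y
    unfold faceFun gface
    rw [hvk3]
  -- membership facts
  have hgood1 : Good (1/(2*(n:ℝ)+2)) x.1 := by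
    refine ⟨by positivity, ?_, x.2⟩
    push_cast
    rw [mul_one_div, div_lt_one (by linarith)]
    linarith
  have hx1k : tmap (1/(2*(n:ℝ)+2)) (1/(2*(n:ℝ)+4-κk)) x.1 ∈ stdSimplex ℝ (Fin (n+1)) := by
    refine hgood1.tmap_mem (by positivity) ?_
    push_cast
    rw [mul_one_div, div_lt_one (by linarith)]
    linarith
  have hx1i : tmap (1/(2*(n:ℝ)+2)) (1/(2*(n:ℝ)+4-κi)) x.1 ∈ stdSimplex ℝ (Fin (n+1)) := by
    refine hgood1.tmap_mem (by positivity) ?_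
    push_cast
    rw [mul_one_div, div_lt_one (by linarith)]
    linarith
  -- bounds for the middle tmap (on n+2 coordinates)
  have hb2 : ((↑(n+1):ℝ)+1) * (1/(2*(n:ℝ)+4)) < 1 := by
    push_cast
    rw [mul_one_div, div_lt_one (by linarith)]
    linarith
  have hb2i : ((↑(n+1):ℝ)+1) * (1/(2*(n:ℝ)+6-κi)) < 1 := by
    push_cast
    rw [mul_one_div, div_lt_one (by linarith)]
    linarith
  have hb2k : ((↑(n+1):ℝ)+1) * (1/(2*(n:ℝ)+6-κk)) < 1 := by
    push_cast
    rw [mul_one_div, div_lt_one (by linarith)]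
    linarith
  -- collapse the iterated levels
  have q1k : (1/(2*(n:ℝ)+4))/(1-κk*(1/(2*(n:ℝ)+4))) = 1/(2*(n:ℝ)+4-κk) := by
    rw [div_eq_div_iff]
    · field_simp
      try ring
    · have : 1-κk*(1/(2*(n:ℝ)+4)) = (2*(n:ℝ)+4-κk)/(2*(n:ℝ)+4) := by field_simp; try ring
      rw [this]
      positivity
    · linarith
  have q1i : (1/(2*(n:ℝ)+4))/(1-κi*(1/(2*(n:ℝ)+4))) = 1/(2*(n:ℝ)+4-κi) := by
    rw [div_eq_div_iff]
    · field_simp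
      try ring
    · have : 1-κi*(1/(2*(n:ℝ)+4)) = (2*(n:ℝ)+4-κi)/(2*(n:ℝ)+4) := by field_simp; try ring
      rw [this]
      positivity
    · linarith
  have q2i : (1/(2*(n:ℝ)+6-κi))/(1-κk*(1/(2*(n:ℝ)+6-κi))) = 1/(2*(n:ℝ)+6-κi-κk) := by
    rw [div_eq_div_iff]
    · field_simp
      try ring
    · have : 1-κk*(1/(2*(n:ℝ)+6-κi)) = (2*(n:ℝ)+6-κi-κk)/(2*(n:ℝ)+6-κi) := by
        field_simp; try ring
      rw [this]
      positivity
    · linarith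
  have q2k : (1/(2*(n:ℝ)+6-κk))/(1-κi*(1/(2*(n:ℝ)+6-κk))) = 1/(2*(n:ℝ)+6-κi-κk) := by
    rw [div_eq_div_iff]
    · field_simp
      try ring
    · have : 1-κi*(1/(2*(n:ℝ)+6-κk)) = (2*(n:ℝ)+6-κi-κk)/(2*(n:ℝ)+6-κk) := by
        field_simp; try ring
      rw [this]
      positivity
    · linarith
  -- now rewrite the goal
  rw [e1, e2, f1k, f1i, f2i, f2k, hfk, hfi, hFi, hFk]
  rw [tmap_gface_v (κ := κk) p hκk hx1k (by positivity) hb2 (by positivity) hb2i]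
  rw [tmap_gface_v (κ := κi) j hκi hx1i (by positivity) hb2 (by positivity) hb2k]
  rw [q1k, q1i, q2i, q2k]
  rw [hgood1.tmap_tmap (b := 1/(2*(n:ℝ)+4-κk)) (by positivity)
      (by push_cast; rw [mul_one_div, div_lt_one (by linarith)]; linarith)
      (c := 1/(2*(n:ℝ)+6-κi-κk)) (by positivity)
      (by push_cast; rw [mul_one_div, div_lt_one (by linarith)]; linarith)]
  rw [hgood1.tmap_tmap (b := 1/(2*(n:ℝ)+4-κi)) (by positivity)
      (by push_cast; rw [mul_one_div, div_lt_one (by linarith)]; linarith)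
      (c := 1/(2*(n:ℝ)+6-κi-κk)) (by positivity)
      (by push_cast; rw [mul_one_div, div_lt_one (by linarith)]; linarith)]
  refine gface_gface j p h _ _ _ _ ?_ ?_ ?_ _
  · field_simp
  · field_simp
  · field_simp
    ring

end DdZero


variable (R : Type) [CommRing R] (X : Type) [TopologicalSpace X]

/-- `Chains R X k` is the module `F(R)_{k-1}(X)` of the paper; in particular
`Chains R X 0 = F(R)_{-1}(X)` is the zero module, and `Chains R X (n+1) = F(R)_n(X)`
is the free `R`-module on the set of continuous maps `Δ_n → X`. -/
def Chains : ℕ → Type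
  | 0 => PUnit
  | (n+1) => C(Spx (n+1), X) →₀ R

instance : ∀ k, AddCommGroup (Chains R X k)
  | 0 => inferInstanceAs (AddCommGroup PUnit)
  | (n+1) => inferInstanceAs (AddCommGroup (C(Spx (n+1), X) →₀ R))

instance (priority := 10000) : ∀ k, Module R (Chains R X k)
  | 0 => inferInstanceAs (Module R PUnit)
  | (n+1) => inferInstanceAs (Module R (C(Spx (n+1), X) →₀ R))

variable {X}

/-- the continuous map `⟨T⟩_{L,n+1,i,j} ∘ Θ_{L,n,i} : Δ_n → X`, for `T : Δ_{n+1} → X`. -/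
def chainFace (L : ℕ) (Θ : ∀ n : ℕ, Fin (L+1) → (Spx (n+1) ≃ₜ Spx (n+1))) (n : ℕ)
    (T : C(Spx (n+2), X)) (i : Fin (L+1)) (j : Fin (n+2)) : C(Spx (n+1), X) :=
  (T.comp (faceCM L (n+1) i j)).comp (Θ n i : C(Spx (n+1), Spx (n+1)))

variable (X)

/-- the boundary operator `∂_{n+1} : F(R)_{n+1}(X) → F(R)_n(X)` of the paper:
`∂(T) = Σ_j (-1)^j Σ_i m_i • [⟨T⟩_{L,n+1,i,j} ∘ Θ_{L,n,i}]` on basis elements. -/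
def bddry (L : ℕ) (m : Fin (L+1) → R)
    (Θ : ∀ n : ℕ, Fin (L+1) → (Spx (n+1) ≃ₜ Spx (n+1))) (n : ℕ) :
    (C(Spx (n+2), X) →₀ R) →ₗ[R] (C(Spx (n+1), X) →₀ R) :=
  Finsupp.lift _ R _ (fun T => ∑ j : Fin (n+2), ∑ i : Fin (L+1),
    ((-1 : R)^(j : ℕ) * m i) • Finsupp.single (chainFace L Θ n T i j) (1 : R))

/-- the full family of boundary operators `∂_k : F(R)_k(X) → F(R)_{k-1}(X)`
of the paper, with `∂_0 = 0`. -/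
def paperBoundary (L : ℕ) (m : Fin (L+1) → R)
    (Θ : ∀ n : ℕ, Fin (L+1) → (Spx (n+1) ≃ₜ Spx (n+1))) :
    ∀ k, Chains R X (k+1) →ₗ[R] Chains R X k
  | 0 => 0
  | (n+1) => bddry R X L m Θ n


section ChainLevel

open DdZero

/-- the chosen family of homeomorphisms. -/
def ThFam : ∀ n : ℕ, Fin (1+1) → (Spx (n+1) ≃ₜ Spx (n+1)) := fun n i => Theta n i

variable {R X}

lemma chainFace_swap (n : ℕ) (T : C(Spx (n+3), X)) (i k : Fin 2) (j p : Fin (n+2))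
    (h : (j:ℕ) ≤ (p:ℕ)) :
    chainFace 1 ThFam n (chainFace 1 ThFam (n+1) T i j.castSucc) k p
      = chainFace 1 ThFam n (chainFace 1 ThFam (n+1) T k p.succ) i j := by
  ext x
  show T (faceCM 1 (n+2) i j.castSucc ((Theta (n+1) i) (faceCM 1 (n+1) k p ((Theta n k) x))))
    = T (faceCM 1 (n+2) k p.succ ((Theta (n+1) k) (faceCM 1 (n+1) i j ((Theta n i) x))))
  exact congrArg T (theta_comm n i k j p h x)

variable (R) in
lemma bddry_single (m : Fin 2 → R) (n : ℕ) (T : C(Spx (n+2), X)) :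
    bddry R X 1 m ThFam n (Finsupp.single T 1)
      = ∑ j : Fin (n+2), ∑ i : Fin 2,
          ((-1 : R)^(j : ℕ) * m i) • Finsupp.single (chainFace 1 ThFam n T i j) (1 : R) := by
  unfold bddry
  rw [Finsupp.lift_apply, Finsupp.sum_single_index (by simp), one_smul]

variable (R) in
/-- a single term of the double boundary sum. -/
def ddTerm (m : Fin 2 → R) (n : ℕ) (T : C(Spx (n+3), X))
    (z : Fin (n+3) × Fin 2 × Fin (n+2) × Fin 2) : C(Spx (n+1), X) →₀ R :=
  ((-1 : R)^(z.1 : ℕ) * m z.2.1) •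
    (((-1 : R)^(z.2.2.1 : ℕ) * m z.2.2.2) •
      Finsupp.single (chainFace 1 ThFam n (chainFace 1 ThFam (n+1) T z.2.1 z.1)
        z.2.2.2 z.2.2.1) (1 : R))

variable (R) in
lemma ddTerm_pair (m : Fin 2 → R) (n : ℕ) (T : C(Spx (n+3), X))
    (j p : Fin (n+2)) (i k : Fin 2) (hjp : (j:ℕ) ≤ (p:ℕ)) :
    ddTerm R m n T (j.castSucc, i, p, k) + ddTerm R m n T (p.succ, k, ⟨(j:ℕ), j.isLt⟩, i) = 0 := by
  have hj' : (⟨(j:ℕ), j.isLt⟩ : Fin (n+2)) = j := rfl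
  unfold ddTerm
  simp only [hj']
  rw [chainFace_swap n T i k j p hjp]
  rw [smul_smul, smul_smul, ← add_smul]
  have hz : ((-1:R)^((j.castSucc : Fin (n+3)) : ℕ) * m i * ((-1:R)^(p:ℕ) * m k)
      + (-1:R)^((p.succ : Fin (n+3)) : ℕ) * m k * ((-1:R)^(j:ℕ) * m i)) = 0 := by
    have h1 : ((p.succ : Fin (n+3)) : ℕ) = (p:ℕ) + 1 := rfl
    have h2 : ((j.castSucc : Fin (n+3)) : ℕ) = (j:ℕ) := rfl
    rw [h1, h2, pow_succ]
    ring
  rw [hz, zero_smul]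

variable (R) in
set_option maxHeartbeats 1000000 in
lemma dd_single (m : Fin 2 → R) (n : ℕ) (T : C(Spx (n+3), X)) :
    bddry R X 1 m ThFam n (bddry R X 1 m ThFam (n+1) (Finsupp.single T 1)) = 0 := by
  classical
  have expand : bddry R X 1 m ThFam n (bddry R X 1 m ThFam (n+1) (Finsupp.single T 1))
      = ∑ j : Fin (n+3), ∑ i : Fin 2, ∑ p : Fin (n+2), ∑ k : Fin 2,
          ddTerm R m n T (j, i, p, k) := by
    rw [bddry_single, map_sum]
    refine Finset.sum_congr rfl fun j _ => ?_
    rw [map_sum]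
    refine Finset.sum_congr rfl fun i _ => ?_
    rw [map_smul, bddry_single, Finset.smul_sum]
    refine Finset.sum_congr rfl fun p _ => ?_
    rw [Finset.smul_sum]
    refine Finset.sum_congr rfl fun k _ => ?_
    rfl
  have hflat : (∑ j : Fin (n+3), ∑ i : Fin 2, ∑ p : Fin (n+2), ∑ k : Fin 2,
      ddTerm R m n T (j, i, p, k)) = ∑ z, ddTerm R m n T z := by
    rw [Fintype.sum_prod_type]
    refine Finset.sum_congr rfl fun j _ => ?_
    rw [Fintype.sum_prod_type]
    refine Finset.sum_congr rfl fun i _ => ?_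
    rw [Fintype.sum_prod_type]
  rw [expand, hflat]
  set g : (Fin (n+3) × Fin 2 × Fin (n+2) × Fin 2) →
      (Fin (n+3) × Fin 2 × Fin (n+2) × Fin 2) := fun z =>
    if h : (z.1 : ℕ) ≤ (z.2.2.1 : ℕ) then
      (z.2.2.1.succ, z.2.2.2, ⟨(z.1 : ℕ), by omega⟩, z.2.1)
    else
      (⟨(z.2.2.1 : ℕ), by omega⟩, z.2.2.2, ⟨(z.1 : ℕ) - 1, by omega⟩, z.2.1) with hgdef
  refine Finset.sum_ninvolution g ?_ ?_ (fun z => Finset.mem_univ _) ?_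
  · rintro ⟨j, i, p, k⟩
    by_cases h : (j : ℕ) ≤ (p : ℕ)
    · have hgz : g (j, i, p, k) = (p.succ, k, ⟨(j:ℕ), by omega⟩, i) := dif_pos h
      rw [hgz]
      exact ddTerm_pair R m n T ⟨(j:ℕ), by omega⟩ p i k h
    · have hgz : g (j, i, p, k)
          = (⟨(p:ℕ), by omega⟩, k, ⟨(j:ℕ) - 1, by omega⟩, i) := dif_neg h
      rw [hgz]
      have hle : ((⟨(p:ℕ), by omega⟩ : Fin (n+2)) : ℕ)
          ≤ ((⟨(j:ℕ) - 1, by omega⟩ : Fin (n+2)) : ℕ) := by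
        show (p:ℕ) ≤ (j:ℕ) - 1
        omega
      have key := ddTerm_pair R m n T ⟨(p:ℕ), by omega⟩ ⟨(j:ℕ) - 1, by omega⟩ k i hle
      have e2 : ((⟨(j:ℕ) - 1, by omega⟩ : Fin (n+2))).succ = j := by
        apply Fin.ext
        show (j:ℕ) - 1 + 1 = (j:ℕ)
        omega
      rw [e2] at key
      exact (add_comm _ _).trans key
  · rintro ⟨j, i, p, k⟩ _
    by_cases h : (j : ℕ) ≤ (p : ℕ)
    · have hgz : g (j, i, p, k) = (p.succ, k, ⟨(j:ℕ), by omega⟩, i) := dif_pos h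
      rw [hgz]
      intro hc
      have hval : (p:ℕ) + 1 = (j:ℕ) := congrArg (fun w : Fin (n+3) × Fin 2 × Fin (n+2) × Fin 2 => (w.1 : ℕ)) hc
      omega
    · have hgz : g (j, i, p, k)
          = (⟨(p:ℕ), by omega⟩, k, ⟨(j:ℕ) - 1, by omega⟩, i) := dif_neg h
      rw [hgz]
      intro hc
      have hval : (p:ℕ) = (j:ℕ) := congrArg (fun w : Fin (n+3) × Fin 2 × Fin (n+2) × Fin 2 => (w.1 : ℕ)) hc
      omega
  · rintro ⟨j, i, p, k⟩
    by_cases h : (j : ℕ) ≤ (p : ℕ)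
    · have hgz : g (j, i, p, k) = (p.succ, k, ⟨(j:ℕ), by omega⟩, i) := dif_pos h
      rw [hgz]
      have h2 : ¬ ((p.succ : Fin (n+3)) : ℕ) ≤ ((⟨(j:ℕ), by omega⟩ : Fin (n+2)) : ℕ) := by
        show ¬ ((p:ℕ) + 1 ≤ (j:ℕ))
        omega
      exact dif_neg h2
    · have hgz : g (j, i, p, k)
          = (⟨(p:ℕ), by omega⟩, k, ⟨(j:ℕ) - 1, by omega⟩, i) := dif_neg h
      rw [hgz]
      have h2 : ((⟨(p:ℕ), by omega⟩ : Fin (n+3)) : ℕ)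
          ≤ ((⟨(j:ℕ) - 1, by omega⟩ : Fin (n+2)) : ℕ) := by
        show (p:ℕ) ≤ (j:ℕ) - 1
        omega
      have hgz2 : g (⟨(p:ℕ), by omega⟩, k, ⟨(j:ℕ) - 1, by omega⟩, i)
          = ((⟨(j:ℕ) - 1, by omega⟩ : Fin (n+2)).succ, i, ⟨(p:ℕ), by omega⟩, k) := dif_pos h2
      rw [hgz2]
      have e2 : ((⟨(j:ℕ) - 1, by omega⟩ : Fin (n+2))).succ = j := by
        apply Fin.ext
        show (j:ℕ) - 1 + 1 = (j:ℕ)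
        omega
      rw [e2]

end ChainLevel


theorem exists_theta_boundary_squared_zero :
    ∃ Θ : ∀ n : ℕ, Fin (1+1) → (Spx (n+1) ≃ₜ Spx (n+1)),
      ∀ (R : Type) [CommRing R] (m : Fin (1+1) → R)
        (X : Type) [TopologicalSpace X] (n : ℕ) (u : Chains R X (n+2)),
        paperBoundary R X 1 m Θ n (paperBoundary R X 1 m Θ (n+1) u) = 0 := by
  refine ⟨ThFam, ?_⟩
  intro R _ m X _ n u
  cases n with
  | zero => rfl
  | succ n' =>
    show bddry R X 1 m ThFam n' (bddry R X 1 m ThFam (n'+1) u) = 0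
    induction u using Finsupp.induction_linear with
    | zero => simp
    | add f g hf hg => rw [map_add, map_add, hf, hg, add_zero]
    | single T b =>
      have hb : (Finsupp.single T b) = b • Finsupp.single T (1:R) := by
        rw [Finsupp.smul_single, smul_eq_mul, mul_one]
      rw [hb, map_smul, map_smul, dd_single, smul_zero]

end
end

section
/- Fix L ∈ ℕ₀, a tuple m = (m_0,…,m_L) ∈ ℤ^{L+1}, any family of homeomorphisms Θ_{L,n,i} : Δ_n → Δ_n (n ∈ ℕ₀, i ∈ {0,…,L}), and let {p} be a one-point topological space; set σ := Σ_{i=0}^{L} m_i. Then for every n, F(ℤ)_n(p) ≅ ℤ (generated by the unique continuous map Δ_n → {p}), the boundary operator ∂_n is zero if n is odd or n = 0 and equals multiplication by σ if n is even and n ≥ 2, so ∂_n ∘ ∂_{n+1} = 0 for all n, and the homology groups H_n(p) := ker(∂_n)/im(∂_{n+1}) satisfy: H_0(p) ≅ ℤ; if σ ≠ 0, then H_n(p) ≅ ℤ/σℤ for n odd and H_n(p) = 0 for n even with n ≥ 2; if σ = 0, then H_n(p) ≅ ℤ for all n ∈ ℕ₀. -/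
open scoped BigOperators

noncomputable section

variable (R : Type) [CommRing R] (X : Type) [TopologicalSpace X]

variable {X}

variable (X)

/-- the unique continuous map from a simplex to the one-point space. -/
def pointMap (k : ℕ) : C(Spx k, PUnit.{1}) := ContinuousMap.const _ PUnit.unit

/-- the homology module `H_n (pt) = ker ∂_n / im ∂_{n+1}` of the one-point space. -/
abbrev homologyPt (L : ℕ) (m : Fin (L+1) → ℤ)
    (Θ : ∀ n : ℕ, Fin (L+1) → (Spx (n+1) ≃ₜ Spx (n+1))) (n : ℕ) :=
  LinearMap.ker (paperBoundary ℤ PUnit L m Θ n) ⧸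
    (LinearMap.range (paperBoundary ℤ PUnit L m Θ (n+1))).comap
      (LinearMap.ker (paperBoundary ℤ PUnit L m Θ n)).subtype

section Aux

instance instUniqueCMapPUnit (Y : Type*) [TopologicalSpace Y] : Unique C(Y, PUnit.{1}) where
  default := ContinuousMap.const _ PUnit.unit
  uniq f := ContinuousMap.ext fun _ => rfl

lemma sum_neg_one_pow (n : ℕ) :
    (∑ j : Fin n, (-1 : ℤ) ^ (j : ℕ)) = if Even n then 0 else 1 := by
  induction n with
  | zero => simp
  | succ n ih =>
    rw [Fin.sum_univ_castSucc]
    simp only [Fin.coe_castSucc, ih, Fin.val_last, Nat.even_add_one]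
    rcases Nat.even_or_odd n with h | h
    · simp [h, Even.neg_one_pow h]
    · simp [Nat.not_even_iff_odd.mpr h, Odd.neg_one_pow h]

/-- `Chains ℤ PUnit (k+1)` is isomorphic to `ℤ`. -/
def eqvC (k : ℕ) : Chains ℤ PUnit (k+1) ≃ₗ[ℤ] ℤ :=
  Finsupp.LinearEquiv.finsuppUnique ℤ ℤ C(Spx (k+1), PUnit.{1})

lemma eqvC_single (k : ℕ) (a : C(Spx (k+1), PUnit.{1})) (b : ℤ) :
    eqvC k (Finsupp.single a b) = b := by
  have h : a = default := Subsingleton.elim _ _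
  subst h
  show (Finsupp.single (default : C(Spx (k+1), PUnit.{1})) b) default = b
  simp

lemma bddry_single_s19 (L : ℕ) (m : Fin (L+1) → ℤ)
    (Θ : ∀ n : ℕ, Fin (L+1) → (Spx (n+1) ≃ₜ Spx (n+1))) (n : ℕ)
    (T : C(Spx (n+2), PUnit.{1})) (b : ℤ) :
    bddry ℤ PUnit L m Θ n (Finsupp.single T b) =
      Finsupp.single (pointMap (n+1))
        ((if Even n then 0 else 1) * (∑ i, m i) * b) := by
  rw [bddry, Finsupp.lift_apply, Finsupp.sum_single_index (by simp)]
  have hc : ∀ (j : Fin (n+2)) (i : Fin (L+1)), chainFace L Θ n T i j = pointMap (n+1) :=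
    fun _ _ => Subsingleton.elim _ _
  simp only [hc, Finsupp.smul_single, smul_eq_mul, mul_one, ← Finsupp.single_finset_sum]
  congr 1
  rw [← Fintype.sum_mul_sum, sum_neg_one_pow]
  have h2 : Even (n+2) ↔ Even n := by simp [Nat.even_add_one, parity_simps]
  rw [if_congr h2 rfl rfl]
  ring

end Aux

section Aux2

variable (L : ℕ) (m : Fin (L+1) → ℤ)
    (Θ : ∀ n : ℕ, Fin (L+1) → (Spx (n+1) ≃ₜ Spx (n+1)))

lemma pb_apply (n : ℕ) (u : C(Spx (n+2), PUnit.{1}) →₀ ℤ) :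
    paperBoundary ℤ PUnit L m Θ (n+1) u =
      Finsupp.single (pointMap (n+1))
        ((if Even n then 0 else 1) * (∑ i, m i) * eqvC (n+1) u) := by
  rw [show paperBoundary ℤ PUnit L m Θ (n+1) = bddry ℤ PUnit L m Θ n from rfl]
  conv_lhs => rw [Finsupp.unique_single u]
  exact bddry_single_s19 L m Θ n default (u default)

lemma pb_zero (n : ℕ) (h : Odd n ∨ n = 0) : paperBoundary ℤ PUnit L m Θ n = 0 := by
  rcases h with ⟨k, rfl⟩ | rfl
  · ext u
    erw [pb_apply L m Θ (2*k) u, if_pos (even_two_mul k)]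
    simp
    rfl
  · rfl

end Aux2

section HomologyAux

variable {R : Type} [CommRing R] {M₀ M₁ M₂ : Type}
  [AddCommGroup M₀] [AddCommGroup M₁] [AddCommGroup M₂]
  [Module R M₀] [Module R M₁] [Module R M₂]

lemma quot_equiv_of_zero (f : M₁ →ₗ[R] M₀) (g : M₂ →ₗ[R] M₁)
    (hf : f = 0) (hg : g = 0) (e₁ : M₁ ≃ₗ[R] R) :
    Nonempty ((LinearMap.ker f ⧸
      (LinearMap.range g).comap (LinearMap.ker f).subtype) ≃ₗ[R] R) := by
  refine ⟨(Submodule.quotEquivOfEqBot _ ?_).trans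
    (((LinearEquiv.ofEq _ ⊤ (by rw [hf]; exact LinearMap.ker_zero)).trans
      Submodule.topEquiv).trans e₁)⟩
  rw [hg]
  simp

lemma quot_equiv_span (f : M₁ →ₗ[R] M₀) (g : M₂ →ₗ[R] M₁) (hf : f = 0)
    (e₁ : M₁ ≃ₗ[R] R) (e₂ : M₂ ≃ₗ[R] R) (σ : R)
    (hg : ∀ u, e₁ (g u) = σ * e₂ u) :
    Nonempty ((LinearMap.ker f ⧸
      (LinearMap.range g).comap (LinearMap.ker f).subtype) ≃ₗ[R]
      R ⧸ Submodule.span R ({σ} : Set R)) := by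
  have hker : LinearMap.ker f = ⊤ := by rw [hf]; exact LinearMap.ker_zero
  let E : (LinearMap.ker f) ≃ₗ[R] R :=
    ((LinearEquiv.ofEq _ ⊤ hker).trans Submodule.topEquiv).trans e₁
  have hE : ∀ x : LinearMap.ker f, E x = e₁ (x : M₁) := by
    intro x
    simp only [E, LinearEquiv.trans_apply, Submodule.topEquiv_apply]
    rw [LinearEquiv.coe_ofEq_apply]
  refine ⟨Submodule.Quotient.equiv _ _ E ?_⟩
  ext z
  simp only [Submodule.mem_map, Submodule.mem_comap, LinearMap.mem_range,
    Submodule.mem_span_singleton]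
  constructor
  · rintro ⟨⟨x, hx⟩, ⟨u, hu⟩, rfl⟩
    refine ⟨e₂ u, ?_⟩
    rw [LinearEquiv.coe_coe, hE]
    have hu' : g u = x := hu
    have hx1 : e₁ x = σ * e₂ u := by rw [← hu']; exact hg u
    show e₂ u • σ = e₁ x
    rw [hx1, smul_eq_mul, mul_comm]
  · rintro ⟨a, rfl⟩
    refine ⟨⟨g (e₂.symm a), by rw [hker]; exact Submodule.mem_top⟩, ⟨e₂.symm a, rfl⟩, ?_⟩
    rw [LinearEquiv.coe_coe, hE, hg]
    simp [mul_comm]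

lemma quot_subsingleton (f : M₁ →ₗ[R] M₀) (g : M₂ →ₗ[R] M₁)
    (hf : LinearMap.ker f = ⊥) :
    Subsingleton (LinearMap.ker f ⧸
      (LinearMap.range g).comap (LinearMap.ker f).subtype) := by
  haveI : Subsingleton (LinearMap.ker f) :=
    Submodule.subsingleton_iff_eq_bot.mpr hf
  exact (Submodule.Quotient.mk_surjective _).subsingleton

end HomologyAux

theorem homology_of_point (L : ℕ) (m : Fin (L+1) → ℤ)
    (Θ : ∀ n : ℕ, Fin (L+1) → (Spx (n+1) ≃ₜ Spx (n+1)))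
    (σ : ℤ) (hσ : σ = ∑ i : Fin (L+1), m i) :
    (∀ n : ℕ, ∃ e : Chains ℤ PUnit (n+1) ≃ₗ[ℤ] ℤ,
        e (Finsupp.single (pointMap (n+1)) 1) = 1) ∧
    (∀ n : ℕ, (Odd n ∨ n = 0) → paperBoundary ℤ PUnit L m Θ n = 0) ∧
    (∀ k : ℕ, Even (k+1) → ∀ T : C(Spx (k+2), PUnit.{1}),
        paperBoundary ℤ PUnit L m Θ (k+1) (Finsupp.single T 1)
          = Finsupp.single (pointMap (k+1)) σ) ∧
    (∀ (n : ℕ) (u : Chains ℤ PUnit (n+2)),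
        paperBoundary ℤ PUnit L m Θ n (paperBoundary ℤ PUnit L m Θ (n+1) u) = 0) ∧
    Nonempty (homologyPt L m Θ 0 ≃ₗ[ℤ] ℤ) ∧
    (σ ≠ 0 → ∀ n : ℕ, Odd n →
        Nonempty (homologyPt L m Θ n ≃ₗ[ℤ] ℤ ⧸ Submodule.span ℤ ({σ} : Set ℤ))) ∧
    (σ ≠ 0 → ∀ n : ℕ, Even n → n ≠ 0 → Subsingleton (homologyPt L m Θ n)) ∧
    (σ = 0 → ∀ n : ℕ, Nonempty (homologyPt L m Θ n ≃ₗ[ℤ] ℤ)) := by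
  have hall0 : ∀ n : ℕ, (Odd n ∨ n = 0) → paperBoundary ℤ PUnit L m Θ n = 0 := pb_zero L m Θ
  refine ⟨fun n => ⟨eqvC n, eqvC_single n _ 1⟩, hall0, ?_, ?_, ?_, ?_, ?_, ?_⟩
  · -- part 3: even boundary is multiplication by σ
    intro k hk T
    exact (bddry_single_s19 L m Θ k T 1).trans
      (by rw [if_neg (Nat.even_add_one.mp hk), one_mul, mul_one, ← hσ])
  · -- part 4: ∂∂ = 0
    intro n u
    rcases Nat.even_or_odd n with h | h
    · rcases Nat.eq_zero_or_pos n with rfl | hn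
      · rw [hall0 0 (Or.inr rfl)]; simp
      · rw [hall0 (n+1) (Or.inl (Even.add_one h))]; simp
    · rw [hall0 n (Or.inl h)]; simp
  · -- part 5: H₀ ≅ ℤ
    exact quot_equiv_of_zero _ _ (hall0 0 (Or.inr rfl)) (hall0 1 (Or.inl odd_one)) (eqvC 0)
  · -- part 6: odd homology
    intro _ n hn
    refine quot_equiv_span _ _ (hall0 n (Or.inl hn)) (eqvC n) (eqvC (n+1)) σ ?_
    intro u
    have h1 := pb_apply L m Θ n u
    rw [if_neg (Nat.not_even_iff_odd.mpr hn), one_mul, ← hσ] at h1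
    have h2 := congrArg (eqvC n) h1
    rw [eqvC_single] at h2
    exact h2
  · -- part 7: even positive homology vanishes
    intro hσ0 n hn hn0
    obtain ⟨k, rfl⟩ : ∃ k, n = k + 1 := ⟨n - 1, by omega⟩
    refine quot_subsingleton _ _ ?_
    rw [LinearMap.ker_eq_bot']
    intro u hu
    erw [pb_apply L m Θ k u, if_neg (Nat.even_add_one.mp hn), one_mul] at hu
    have h2 := congrArg (eqvC k) hu
    rw [eqvC_single, map_zero] at h2
    have hm : (∑ i : Fin (L+1), m i) ≠ 0 := by rw [← hσ]; exact hσ0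
    have h3 : eqvC (k+1) u = 0 := by
      rcases mul_eq_zero.mp h2 with h | h
      · exact absurd h hm
      · exact h
    exact (LinearEquiv.map_eq_zero_iff _).mp h3
  · -- σ = 0 case
    intro h0 n
    have hm : (∑ i : Fin (L+1), m i) = 0 := by rw [← hσ]; exact h0
    have hall : ∀ j : ℕ, paperBoundary ℤ PUnit L m Θ j = 0 := by
      intro j
      rcases Nat.even_or_odd j with h | h
      · rcases j with _ | k
        · rfl
        · ext u
          erw [pb_apply L m Θ k u, hm]
          simp
          rfl
      · exact hall0 j (Or.inl h)
    exact quot_equiv_of_zero _ _ (hall n) (hall (n+1)) (eqvC n)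

end
end
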